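/- arXiv:1101.5982 — 4 statements merged into one kernel-verified Lean document; each statement's English description precedes it below -/
import Mathlib

section
/- Let T be a Tambara functor on a finite group G. For any G-map f : X → Y of finite G-sets, define f_!(x) = f_•(x) - f_•(0), where f_• is the multiplicative transfer. Then f_! is multiplicative: f_!(x)·f_!(y) = f_!(xy) for all x, y in T(X). -/
set_option autoImplicit false

/-! Finite G-sets -/

structure GSet (G : Type) [Group G] : Type 1 where
  carrier : Type
  [mulAction : MulAction G carrier]
  [finite : Finite carrier]

attribute [instance] GSet.mulAction GSet.finite

/-- Equivariant maps of finite `G`-sets. -/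
structure GSetHom {G : Type} [Group G] (X Y : GSet G) : Type where
  toFun : X.carrier → Y.carrier
  map_smul : ∀ (g : G) (x : X.carrier), toFun (g • x) = g • toFun x

namespace GSetHom

variable {G : Type} [Group G]

def id (X : GSet G) : GSetHom X X := ⟨fun x => x, fun _ _ => rfl⟩

def comp {X Y Z : GSet G} (g : GSetHom Y Z) (f : GSetHom X Y) : GSetHom X Z :=
  ⟨fun x => g.toFun (f.toFun x), fun a x => by
    show g.toFun (f.toFun (a • x)) = a • g.toFun (f.toFun x)
    rw [f.map_smul, g.map_smul]⟩

end GSetHom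

namespace GSet

variable {G : Type} [Group G]

/-- Binary disjoint union of `G`-sets. -/
def sum (X Y : GSet G) : GSet G where
  carrier := X.carrier ⊕ Y.carrier

def inl (X Y : GSet G) : GSetHom X (X.sum Y) := ⟨Sum.inl, fun _ _ => rfl⟩

def inr (X Y : GSet G) : GSetHom Y (X.sum Y) := ⟨Sum.inr, fun _ _ => rfl⟩

instance : MulAction G Empty where
  smul _ x := x.elim
  one_smul x := x.elim
  mul_smul _ _ x := x.elim

/-- The empty `G`-set. -/
def empty (G : Type) [Group G] : GSet G where
  carrier := Empty

/-- Finite disjoint unions of `G`-sets. -/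
def sigma {n : ℕ} (Xs : Fin n → GSet G) : GSet G where
  carrier := Σ i, (Xs i).carrier

def sigmaIncl {n : ℕ} (Xs : Fin n → GSet G) (i : Fin n) : GSetHom (Xs i) (sigma Xs) :=
  ⟨fun x => ⟨i, x⟩, fun _ _ => rfl⟩

/-- The canonical pullback of two `G`-maps. -/
def pullback {X Y Z : GSet G} (f : GSetHom X Z) (g : GSetHom Y Z) : GSet G where
  carrier := { q : X.carrier × Y.carrier // f.toFun q.1 = g.toFun q.2 }
  mulAction :=
  { smul := fun a q => ⟨a • q.val, by
      show f.toFun (a • q.val.1) = g.toFun (a • q.val.2)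
      rw [f.map_smul, g.map_smul, q.property]⟩
    one_smul := fun q => Subtype.ext (one_smul G q.val)
    mul_smul := fun a b q => Subtype.ext (mul_smul a b q.val) }

def pbFst {X Y Z : GSet G} (f : GSetHom X Z) (g : GSetHom Y Z) :
    GSetHom (pullback f g) X := ⟨fun q => q.val.1, fun _ _ => rfl⟩

def pbSnd {X Y Z : GSet G} (f : GSetHom X Z) (g : GSetHom Y Z) :
    GSetHom (pullback f g) Y := ⟨fun q => q.val.2, fun _ _ => rfl⟩

/-- The complement of the image of a `G`-map, as a `G`-set. -/
def compl {X Y : GSet G} (f : GSetHom X Y) : GSet G where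
  carrier := { y : Y.carrier // ∀ x, f.toFun x ≠ y }
  mulAction :=
  { smul := fun g y => ⟨g • y.val, fun x h => y.property (g⁻¹ • x) (by
      rw [f.map_smul, h, inv_smul_smul])⟩
    one_smul := fun y => Subtype.ext (one_smul G y.val)
    mul_smul := fun a b y => Subtype.ext (mul_smul a b y.val) }

def complIncl {X Y : GSet G} (f : GSetHom X Y) : GSetHom (compl f) Y :=
  ⟨fun y => y.val, fun _ _ => rfl⟩

/-- Points of Tambara's dependent product `Π_f(A)`: pairs `(y, σ)` of a point `y : Y`
and a section `σ` of `p` on the fiber `f⁻¹(y)` (encoded as an `Option`-valued function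
supported exactly on the fiber). -/
def PiProp {X Y A : GSet G} (f : GSetHom X Y) (p : GSetHom A X)
    (s : Y.carrier × (X.carrier → Option A.carrier)) : Prop :=
  (∀ x, (s.2 x).isSome = true ↔ f.toFun x = s.1) ∧
  (∀ x a, s.2 x = some a → p.toFun a = x)

def PiCar {X Y A : GSet G} (f : GSetHom X Y) (p : GSetHom A X) : Type :=
  { s : Y.carrier × (X.carrier → Option A.carrier) // PiProp f p s }

instance optionFinite {α : Type} [Finite α] : Finite (Option α) :=
  Finite.of_equiv _ (Equiv.optionEquivSumPUnit.{0,0} α).symm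

instance piFinite {X Y A : GSet G} (f : GSetHom X Y) (p : GSetHom A X) :
    Finite (PiCar f p) := by
  unfold PiCar; infer_instance

def piSmul {X Y A : GSet G} (f : GSetHom X Y) (p : GSetHom A X) (g : G)
    (s : PiCar f p) : PiCar f p :=
  ⟨(g • s.val.1, fun x => (s.val.2 (g⁻¹ • x)).map (g • ·)), by
    constructor
    · intro x
      rw [Option.isSome_map, s.property.1 (g⁻¹ • x), f.map_smul]
      constructor
      · intro h; rw [← h, smul_inv_smul]
      · intro h; rw [h, inv_smul_smul]
    · intro x a ha
      rcases Option.map_eq_some_iff.mp ha with ⟨b, hb, rfl⟩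
      rw [p.map_smul, s.property.2 _ _ hb, smul_inv_smul]⟩

instance piAction {X Y A : GSet G} (f : GSetHom X Y) (p : GSetHom A X) :
    MulAction G (PiCar f p) where
  smul := piSmul f p
  one_smul s := by
    apply Subtype.ext
    refine Prod.ext (one_smul G s.val.1) ?_
    funext x
    show (s.val.2 ((1:G)⁻¹ • x)).map ((1:G) • ·) = s.val.2 x
    rw [inv_one, one_smul]
    cases h : s.val.2 x <;> simp [one_smul]
  mul_smul a b s := by
    apply Subtype.ext
    refine Prod.ext (mul_smul a b s.val.1) ?_
    funext x
    show (s.val.2 ((a * b)⁻¹ • x)).map ((a * b) • ·)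
        = ((s.val.2 (b⁻¹ • (a⁻¹ • x))).map (b • ·)).map (a • ·)
    rw [Option.map_map, mul_inv_rev, mul_smul]
    cases h : s.val.2 (b⁻¹ • a⁻¹ • x) <;> simp [mul_smul, Function.comp]

/-- Tambara's dependent product `Π_f(A)` as a `G`-set. -/
def piObj {X Y A : GSet G} (f : GSetHom X Y) (p : GSetHom A X) : GSet G where
  carrier := PiCar f p

/-- The projection `π : Π_f(A) → Y`. -/
def piPr {X Y A : GSet G} (f : GSetHom X Y) (p : GSetHom A X) :
    GSetHom (piObj f p) Y := ⟨fun s => s.val.1, fun _ _ => rfl⟩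

theorem optGet {α : Type} {o : Option α} {a : α} (h : o = some a) :
    ∀ hs : o.isSome = true, o.get hs = a := by subst h; intro _; rfl

/-- The evaluation map `λ : X ×_Y Π_f(A) → A`, `(x, (y, σ)) ↦ σ(x)`. -/
def piEval {X Y A : GSet G} (f : GSetHom X Y) (p : GSetHom A X) :
    GSetHom (pullback f (piPr f p)) A where
  toFun z := (z.val.2.val.2 z.val.1).get (by
    rw [z.val.2.property.1 z.val.1]; exact z.property)
  map_smul g z := by
    have hs : (z.val.2.val.2 z.val.1).isSome = true := by
      rw [z.val.2.property.1 z.val.1]; exact z.property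
    obtain ⟨a, ha⟩ := Option.isSome_iff_exists.mp hs
    have h1 : z.val.2.val.2 z.val.1 = some a := ha
    have h2 : (g • z).val.2.val.2 (g • z).val.1 = some (g • a) := by
      show (z.val.2.val.2 (g⁻¹ • (g • z.val.1))).map (g • ·) = some (g • a)
      rw [inv_smul_smul, h1]; rfl
    simp only [optGet h2, optGet h1]

end GSet

namespace GSet

/-- A transitive (nonempty) finite `G`-set. -/
def IsTransitive {G : Type} [Group G] (X : GSet G) : Prop :=
  Nonempty X.carrier ∧ MulAction.IsPretransitive G X.carrier

end GSet

/-! Tambara functors -/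

/-- The underlying system of commutative rings of a Tambara functor. -/
structure TamData (G : Type) [Group G] : Type 1 where
  obj : GSet G → Type
  ring : ∀ X, CommRing (obj X)

attribute [instance] TamData.ring

/-- A Tambara functor on the finite group `G`: a system of commutative rings `obj X`
indexed by finite `G`-sets, together with restrictions `res`, additive transfers `tr`
and multiplicative transfers `nm`, functorial, additive, satisfying the Mackey
base-change conditions, the projection formula, and Tambara's distributive law. -/
structure TambaraFunctor (G : Type) [Group G] extends TamData G where
  res : ∀ {X Y : GSet G}, GSetHom X Y → (obj Y →+* obj X)
  tr : ∀ {X Y : GSet G}, GSetHom X Y → (obj X →+ obj Y)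
  nm : ∀ {X Y : GSet G}, GSetHom X Y → (obj X →* obj Y)
  res_id : ∀ {X : GSet G} (x : obj X), res (GSetHom.id X) x = x
  res_comp : ∀ {X Y Z : GSet G} (f : GSetHom X Y) (g : GSetHom Y Z) (z : obj Z),
    res f (res g z) = res (g.comp f) z
  tr_id : ∀ {X : GSet G} (x : obj X), tr (GSetHom.id X) x = x
  tr_comp : ∀ {X Y Z : GSet G} (f : GSetHom X Y) (g : GSetHom Y Z) (x : obj X),
    tr g (tr f x) = tr (g.comp f) x
  nm_id : ∀ {X : GSet G} (x : obj X), nm (GSetHom.id X) x = x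
  nm_comp : ∀ {X Y Z : GSet G} (f : GSetHom X Y) (g : GSetHom Y Z) (x : obj X),
    nm g (nm f x) = nm (g.comp f) x
  /-- additivity on binary disjoint unions -/
  add_bij : ∀ X Y : GSet G, Function.Bijective
    (fun t : obj (X.sum Y) => (res (GSet.inl X Y) t, res (GSet.inr X Y) t))
  /-- `T(∅)` is the zero ring -/
  empty_subsingleton : ∀ x y : obj (GSet.empty G), x = y
  /-- Mackey base change for the additive transfer -/
  tr_bc : ∀ {X Y Z : GSet G} (f : GSetHom X Z) (g : GSetHom Y Z) (x : obj X),
    res g (tr f x) = tr (GSet.pbSnd f g) (res (GSet.pbFst f g) x)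
  /-- Mackey base change for the multiplicative transfer -/
  nm_bc : ∀ {X Y Z : GSet G} (f : GSetHom X Z) (g : GSetHom Y Z) (x : obj X),
    res g (nm f x) = nm (GSet.pbSnd f g) (res (GSet.pbFst f g) x)
  /-- the projection formula -/
  proj_formula : ∀ {X Y : GSet G} (f : GSetHom X Y) (a : obj X) (b : obj Y),
    tr f (a * res f b) = tr f a * b
  /-- the norm of zero is the additive transfer of `1` from the complement of the image -/
  nm_zero : ∀ {X Y : GSet G} (f : GSetHom X Y), nm f (0 : obj X) = tr (GSet.complIncl f) 1
  /-- Tambara's distributive law, via the canonical exponential diagram on `Π_f(A)` -/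
  distrib : ∀ {X Y A : GSet G} (f : GSetHom X Y) (p : GSetHom A X) (a : obj A),
    nm f (tr p a) = tr (GSet.piPr f p)
      (nm (GSet.pbSnd f (GSet.piPr f p)) (res (GSet.piEval f p) a))

namespace TambaraFunctor

variable {G : Type} [Group G]

/-- `f_!(x) = f_•(x) - f_•(0)`. -/
def shriek (T : TambaraFunctor G) {X Y : GSet G} (f : GSetHom X Y) (x : T.obj X) :
    T.obj Y := T.nm f x - T.nm f 0

end TambaraFunctor

/-- A morphism of Tambara functors: a family of ring homomorphisms natural with respect
to restrictions, additive transfers and multiplicative transfers. -/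
structure TamHom {G : Type} [Group G] (T S : TambaraFunctor G) where
  app : ∀ X : GSet G, T.obj X →+* S.obj X
  app_res : ∀ {X Y : GSet G} (f : GSetHom X Y) (y : T.obj Y),
    app X (T.res f y) = S.res f (app Y y)
  app_tr : ∀ {X Y : GSet G} (f : GSetHom X Y) (x : T.obj X),
    app Y (T.tr f x) = S.tr f (app X x)
  app_nm : ∀ {X Y : GSet G} (f : GSetHom X Y) (x : T.obj X),
    app Y (T.nm f x) = S.nm f (app X x)

namespace TambaraFunctor

variable {G : Type} [Group G]

/-- An ideal of a Tambara functor: a family of ideals closed under restrictions,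
additive transfers, and satisfying `f_•(𝔦(X)) ⊆ f_•(0) + 𝔦(Y)`
(equivalently, closed under `f_!`). -/
structure IsIdeal (T : TambaraFunctor G) (I : ∀ X : GSet G, Ideal (T.obj X)) : Prop where
  res_mem : ∀ {X Y : GSet G} (f : GSetHom X Y) {y : T.obj Y}, y ∈ I Y → T.res f y ∈ I X
  tr_mem : ∀ {X Y : GSet G} (f : GSetHom X Y) {x : T.obj X}, x ∈ I X → T.tr f x ∈ I Y
  shriek_mem : ∀ {X Y : GSet G} (f : GSetHom X Y) {x : T.obj X},
    x ∈ I X → T.shriek f x ∈ I Y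

/-- The ideal generated by a family of subsets: the intersection of all ideals
containing it. -/
def gen (T : TambaraFunctor G) (S : ∀ X : GSet G, Set (T.obj X)) (X : GSet G) :
    Ideal (T.obj X) :=
  ⨅ (I : ∀ Y : GSet G, Ideal (T.obj Y)) (_ : T.IsIdeal I) (_ : ∀ Y, S Y ⊆ ↑(I Y)), I X

/-- The family of subsets consisting of the single element `a ∈ T(A)`. -/
def single (T : TambaraFunctor G) (A : GSet G) (a : T.obj A) (X : GSet G) :
    Set (T.obj X) := { x | ∃ h : A = X, h ▸ a = x }

/-- The principal ideal `⟨a⟩` generated by `a ∈ T(A)`. -/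
def principal (T : TambaraFunctor G) (A : GSet G) (a : T.obj A) :
    ∀ X : GSet G, Ideal (T.obj X) := T.gen (T.single A a)

/-- The defining set of the product of two ideals. -/
def mulSet (T : TambaraFunctor G) (I J : ∀ X : GSet G, Ideal (T.obj X)) (X : GSet G) :
    Set (T.obj X) :=
  { x | ∃ (A : GSet G) (p : GSetHom A X) (a b : T.obj A),
      a ∈ I A ∧ b ∈ J A ∧ x = T.tr p (a * b) }

/-- The product of two ideals of a Tambara functor. -/
def mulIdl (T : TambaraFunctor G) (I J : ∀ X : GSet G, Ideal (T.obj X)) (X : GSet G) :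
    Ideal (T.obj X) := Ideal.span (T.mulSet I J X)

/-- Iterated products of ideals. -/
def mulMulti (T : TambaraFunctor G) :
    List (∀ X : GSet G, Ideal (T.obj X)) → ∀ X : GSet G, Ideal (T.obj X)
  | [] => fun _ => ⊤
  | I :: ls => T.mulIdl I (T.mulMulti ls)

/-- A prime ideal of a Tambara functor. -/
structure IsPrime (T : TambaraFunctor G) (P : ∀ X : GSet G, Ideal (T.obj X)) : Prop where
  isIdeal : T.IsIdeal P
  ne_top : ∃ X : GSet G, P X ≠ ⊤
  mem_or_mem : ∀ {X Y : GSet G}, X.IsTransitive → Y.IsTransitive →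
    ∀ {a : T.obj X} {b : T.obj Y},
      (∀ Z : GSet G, T.mulIdl (T.principal X a) (T.principal Y b) Z ≤ P Z) →
      a ∈ P X ∨ b ∈ P Y

/-- A maximal ideal of a Tambara functor. -/
structure IsMaximal (T : TambaraFunctor G) (M : ∀ X : GSet G, Ideal (T.obj X)) : Prop where
  isIdeal : T.IsIdeal M
  ne_top : ∃ X : GSet G, M X ≠ ⊤
  eq_of_le : ∀ K : ∀ X : GSet G, Ideal (T.obj X), T.IsIdeal K →
    (∀ X, M X ≤ K X) → (K = M ∨ ∀ X, K X = ⊤)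

end TambaraFunctor

namespace GSet

/-- The `G`-set `G/e`, i.e. `G` with the left regular action. -/
def regular (G : Type) [Group G] [Finite G] : GSet G where
  carrier := G

/-- Right multiplication `G/e → G/e`, an equivariant map. -/
def rightMul {G : Type} [Group G] [Finite G] (g : G) :
    GSetHom (regular G) (regular G) :=
  ⟨fun x => (id x : G) * g, fun a x => mul_assoc a x g⟩

end GSet

/-- `f_!` is multiplicative: `f_!(x)·f_!(y) = f_!(xy)`. -/
theorem shriek_mul (G : Type) [Group G] [Finite G] (T : TambaraFunctor G)
    {X Y : GSet G} (f : GSetHom X Y) (x y : T.obj X) :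
    T.shriek f x * T.shriek f y = T.shriek f (x * y) := by
  -- notation
  set c := GSet.complIncl f with hc
  -- the pullback of f along c is empty
  have key : ∀ z : T.obj X, T.nm f 0 * T.nm f z = T.nm f 0 := by
    intro z
    set P := GSet.pullback f c with hP
    -- P is empty: any point gives a contradiction
    have hPempty : ∀ q : P.carrier, False := fun q =>
      q.val.2.property q.val.1 q.property
    -- map P → empty and empty → P
    let h : GSetHom P (GSet.empty G) :=
      ⟨fun q => (hPempty q).elim, fun g q => (hPempty q).elim⟩
    let e : GSetHom (GSet.empty G) P :=
      ⟨fun x => x.elim, fun g x => x.elim⟩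
    have hid : e.comp h = GSetHom.id P := by
      have : (e.comp h).toFun = (GSetHom.id P).toFun := by
        funext q; exact (hPempty q).elim
      cases hE : e.comp h; cases hI : GSetHom.id P
      rw [hE, hI] at this; cases this; rfl
    -- T(P) is a subsingleton
    have hsub : ∀ a b : T.obj P, a = b := by
      intro a b
      have ha : a = T.res h (T.res e a) := by
        rw [T.res_comp, hid, T.res_id]
      have hb : b = T.res h (T.res e b) := by
        rw [T.res_comp, hid, T.res_id]
      rw [ha, hb, T.empty_subsingleton (T.res e a) (T.res e b)]
    -- restriction of nm f z along c is 1
    have hres : T.res c (T.nm f z) = 1 := by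
      rw [T.nm_bc f c z]
      have : T.res (GSet.pbFst f c) z = (1 : T.obj P) := hsub _ _
      rw [this, map_one]
    -- projection formula with a = 1, b = nm f z
    have hproj := T.proj_formula c (1 : T.obj (GSet.compl f)) (T.nm f z)
    rw [hres, mul_one] at hproj
    rw [T.nm_zero f]
    exact hproj.symm
  have k0 := key 0
  have kx := key x
  have ky := key y
  unfold TambaraFunctor.shriek
  rw [map_mul]
  have hcm : ∀ z : T.obj X, T.nm f z * T.nm f 0 = T.nm f 0 := fun z => by
    rw [mul_comm]; exact key z
  linear_combination - hcm x - key y + key 0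
end

section
/- Let T be a Tambara functor on a finite group G and 𝔦 ⊆ T an ideal. Then the family of quotient rings T(X)/𝔦(X) carries a natural Tambara functor structure induced from T, and the projections T(X) → T(X)/𝔦(X) form a morphism of Tambara functors T → T/𝔦. In particular, the induced multiplicative transfer f_•(x + 𝔦(X)) = f_•(x) + 𝔦(Y) is well defined. -/
set_option autoImplicit false

section Dev
open TambaraFunctor

variable {G : Type} [Group G]

theorem GSetHom.ext' {X Y : GSet G} {f g : GSetHom X Y} (h : f.toFun = g.toFun) : f = g := by
  cases f; cases g; simp_all

/-- map into the empty G-set from an empty-carrier G-set -/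
def toEmptyHom (E : GSet G) [IsEmpty E.carrier] : GSetHom E (GSet.empty G) :=
  ⟨fun e => (IsEmpty.false e).elim, fun _ e => (IsEmpty.false e).elim⟩

def fromEmptyHom (E : GSet G) : GSetHom (GSet.empty G) E :=
  ⟨fun e => e.elim, fun _ e => e.elim⟩

theorem obj_subsingleton (T : TambaraFunctor G) (E : GSet G) [IsEmpty E.carrier]
    (a b : T.obj E) : a = b := by
  have h1 : (toEmptyHom E).comp (fromEmptyHom E) = GSetHom.id (GSet.empty G) :=
    GSetHom.ext' (funext fun e => e.elim)
  have h2 : (fromEmptyHom E).comp (toEmptyHom E) = GSetHom.id E :=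
    GSetHom.ext' (funext fun e => (IsEmpty.false e).elim)
  have key : ∀ c : T.obj E, c = T.res (toEmptyHom E) (T.res (fromEmptyHom E) c) := by
    intro c
    rw [T.res_comp, h2, T.res_id]
  rw [key a, key b, T.empty_subsingleton (T.res (fromEmptyHom E) a) (T.res (fromEmptyHom E) b)]

theorem tr_of_empty (T : TambaraFunctor G) {E Y : GSet G} [IsEmpty E.carrier]
    (f : GSetHom E Y) (a : T.obj E) : T.tr f a = 0 := by
  rw [obj_subsingleton T E a 0, map_zero]

theorem nm_of_empty (T : TambaraFunctor G) {E Y : GSet G} [IsEmpty E.carrier]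
    (f : GSetHom E Y) (a : T.obj E) : T.nm f a = 1 := by
  rw [obj_subsingleton T E a 1, map_one]

/-- complement of a surjective map is empty -/
theorem compl_isEmpty {A B : GSet G} (q : GSetHom A B) (hq : Function.Surjective q.toFun) :
    IsEmpty (GSet.compl q).carrier := by
  constructor
  rintro ⟨y, hy⟩
  obtain ⟨x, hx⟩ := hq y
  exact hy x hx

theorem nm_zero_of_surj (T : TambaraFunctor G) {A B : GSet G} (q : GSetHom A B)
    (hq : Function.Surjective q.toFun) : T.nm q 0 = 0 := by
  have : IsEmpty (GSet.compl q).carrier := compl_isEmpty q hq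
  rw [T.nm_zero, tr_of_empty]

theorem nm_mem_of_surj (T : TambaraFunctor G) {I : ∀ X : GSet G, Ideal (T.obj X)}
    (hI : T.IsIdeal I) {A B : GSet G} (q : GSetHom A B)
    (hq : Function.Surjective q.toFun) {a : T.obj A} (ha : a ∈ I A) :
    T.nm q a ∈ I B := by
  have h := hI.shriek_mem q ha
  unfold TambaraFunctor.shriek at h
  rw [nm_zero_of_surj T q hq, sub_zero] at h
  exact h

end Dev

section Machinery
open TambaraFunctor GSet

variable {G : Type} [Group G]

theorem pb_diag {A B : GSet G} (c : GSetHom A B) (hc : Function.Injective c.toFun) :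
    GSet.pbFst c c = GSet.pbSnd c c := by
  apply GSetHom.ext'
  funext q
  exact hc q.property

variable {W V : GSet G} (h : GSetHom W V)

/-- first complement inclusion -/
noncomputable abbrev mc1 : GSetHom (GSet.compl h) V := GSet.complIncl h
/-- second complement inclusion (image part) -/
noncomputable abbrev mc2 : GSetHom (GSet.compl (GSet.complIncl h)) V :=
  GSet.complIncl (GSet.complIncl h)

theorem mc1_inj : Function.Injective (mc1 h).toFun := fun _ _ hab => Subtype.ext hab
theorem mc2_inj : Function.Injective (mc2 h).toFun := fun _ _ hab => Subtype.ext hab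

instance pb_h_c1_empty : IsEmpty (GSet.pullback h (mc1 h)).carrier := by
  constructor; rintro ⟨⟨w, ω⟩, hq⟩
  exact ω.property w hq

instance pb_c1_c2_empty : IsEmpty (GSet.pullback (mc1 h) (mc2 h)).carrier := by
  constructor; rintro ⟨⟨ω, ω₂⟩, hq⟩
  exact ω₂.property ω hq

instance pb_c2_c1_empty : IsEmpty (GSet.pullback (mc2 h) (mc1 h)).carrier := by
  constructor; rintro ⟨⟨ω₂, ω⟩, hq⟩
  exact ω₂.property ω hq.symm

theorem c2_char (ω₂ : (GSet.compl (GSet.complIncl h)).carrier) :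
    ∃ w, h.toFun w = ω₂.val := by
  by_contra hc
  push_neg at hc
  exact ω₂.property ⟨ω₂.val, hc⟩ rfl

section WithT
variable (T : TambaraFunctor G)

theorem res_c1_e1 : T.res (mc1 h) (T.nm h 0) = 1 := by
  rw [T.nm_bc h (mc1 h)]
  exact nm_of_empty T _ _

theorem res_c2_e2 : T.res (mc2 h) (T.nm (mc1 h) 0) = 1 := by
  rw [T.nm_bc (mc1 h) (mc2 h)]
  exact nm_of_empty T _ _

theorem res_c2_tr_c1 (s : T.obj (GSet.compl h)) : T.res (mc2 h) (T.tr (mc1 h) s) = 0 := by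
  rw [T.tr_bc (mc1 h) (mc2 h)]
  exact tr_of_empty T _ _

theorem res_c1_tr_c2 (s : T.obj (GSet.compl (GSet.complIncl h))) :
    T.res (mc1 h) (T.tr (mc2 h) s) = 0 := by
  rw [T.tr_bc (mc2 h) (mc1 h)]
  exact tr_of_empty T _ _

theorem res_c2_e1 : T.res (mc2 h) (T.nm h 0) = 0 := by
  rw [T.nm_zero h]
  exact res_c2_tr_c1 h T 1

theorem res_c1_e2 : T.res (mc1 h) (T.nm (mc1 h) 0) = 0 := by
  rw [T.nm_zero (mc1 h)]
  exact res_c1_tr_c2 h T 1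

theorem tr_c1_one : T.tr (mc1 h) 1 = T.nm h 0 := (T.nm_zero h).symm

theorem tr_c2_one : T.tr (mc2 h) 1 = T.nm (mc1 h) 0 := (T.nm_zero (mc1 h)).symm

theorem res_c1_tr_c1 (s : T.obj (GSet.compl h)) : T.res (mc1 h) (T.tr (mc1 h) s) = s := by
  have hdiag := pb_diag (mc1 h) (mc1_inj h)
  have h1 : T.tr (GSet.pbSnd (mc1 h) (mc1 h)) 1 = 1 := by
    have hb := T.tr_bc (mc1 h) (mc1 h) (1 : T.obj (GSet.compl h))
    rw [tr_c1_one, res_c1_e1, RingHom.map_one] at hb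
    exact hb.symm
  rw [T.tr_bc (mc1 h) (mc1 h) s, hdiag,
    ← one_mul (T.res (GSet.pbSnd (mc1 h) (mc1 h)) s),
    T.proj_formula (GSet.pbSnd (mc1 h) (mc1 h)) 1 s, h1, one_mul]

theorem res_c2_tr_c2 (s : T.obj (GSet.compl (GSet.complIncl h))) :
    T.res (mc2 h) (T.tr (mc2 h) s) = s := by
  have hdiag := pb_diag (mc2 h) (mc2_inj h)
  have h1 : T.tr (GSet.pbSnd (mc2 h) (mc2 h)) 1 = 1 := by
    have hb := T.tr_bc (mc2 h) (mc2 h) (1 : T.obj (GSet.compl (GSet.complIncl h)))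
    rw [tr_c2_one, res_c2_e2, RingHom.map_one] at hb
    exact hb.symm
  rw [T.tr_bc (mc2 h) (mc2 h) s, hdiag,
    ← one_mul (T.res (GSet.pbSnd (mc2 h) (mc2 h)) s),
    T.proj_formula (GSet.pbSnd (mc2 h) (mc2 h)) 1 s, h1, one_mul]

end WithT
end Machinery

section Machinery2
open TambaraFunctor GSet

variable {G : Type} [Group G]
variable {W V : GSet G} (h : GSetHom W V)

/-- the canonical bijection from the sum of the two complements -/
noncomputable def mkSum : GSetHom ((GSet.compl h).sum (GSet.compl (GSet.complIncl h))) V :=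
  ⟨Sum.elim (fun ω => ω.val) (fun ω₂ => ω₂.val), by rintro g (ω|ω) <;> rfl⟩

theorem mkSum_inl : (mkSum h).comp (GSet.inl _ _) = mc1 h := GSetHom.ext' rfl
theorem mkSum_inr : (mkSum h).comp (GSet.inr _ _) = mc2 h := GSetHom.ext' rfl

open Classical in
noncomputable def mkInvFun : V.carrier → ((GSet.compl h).sum (GSet.compl (GSet.complIncl h))).carrier :=
  fun v =>
  if hv : ∀ w, h.toFun w ≠ v then Sum.inl ⟨v, hv⟩ else
    Sum.inr ⟨v, fun γ hγ => by
      push_neg at hv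
      obtain ⟨w, hw⟩ := hv
      exact γ.property w (hw.trans hγ.symm)⟩

open Classical in
theorem mkSum_mkInvFun (u : V.carrier) : (mkSum h).toFun (mkInvFun h u) = u := by
  unfold mkInvFun
  by_cases hu : ∀ w, h.toFun w ≠ u
  · erw [dif_pos hu]; rfl
  · erw [dif_neg hu]; rfl

theorem mkSum_inj : Function.Injective (mkSum h).toFun := by
  rintro (ω|ω) (ω'|ω') hab <;> simp only [mkSum, Sum.elim_inl, Sum.elim_inr] at hab
  · exact congrArg Sum.inl (Subtype.ext hab)
  · exact absurd hab (ω'.property ω)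
  · exact absurd hab.symm (ω.property ω')
  · exact congrArg Sum.inr (Subtype.ext hab)

noncomputable def mkSumInv : GSetHom V ((GSet.compl h).sum (GSet.compl (GSet.complIncl h))) :=
  ⟨mkInvFun h, by
    intro g v
    apply mkSum_inj h
    rw [(mkSum h).map_smul g _, mkSum_mkInvFun, mkSum_mkInvFun]⟩

theorem mkSum_comp_inv : (mkSum h).comp (mkSumInv h) = GSetHom.id V := by
  apply GSetHom.ext'
  funext v
  exact mkSum_mkInvFun h v

section WithT
variable (T : TambaraFunctor G)

theorem psi_inj {s t : T.obj V} (h1 : T.res (mc1 h) s = T.res (mc1 h) t)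
    (h2 : T.res (mc2 h) s = T.res (mc2 h) t) : s = t := by
  have key : ∀ u : T.obj V, u = T.res (mkSumInv h) (T.res (mkSum h) u) := by
    intro u
    rw [T.res_comp, mkSum_comp_inv, T.res_id]
  rw [key s, key t]
  congr 1
  apply (T.add_bij (GSet.compl h) (GSet.compl (GSet.complIncl h))).injective
  simp only [Prod.mk.injEq]
  constructor
  · rw [T.res_comp, T.res_comp, mkSum_inl, h1]
  · rw [T.res_comp, T.res_comp, mkSum_inr, h2]

theorem decomp (s : T.obj V) :
    s = T.tr (mc1 h) (T.res (mc1 h) s) + T.tr (mc2 h) (T.res (mc2 h) s) := by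
  apply psi_inj h T
  · rw [map_add, res_c1_tr_c1, res_c1_tr_c2, add_zero]
  · rw [map_add, res_c2_tr_c1, res_c2_tr_c2, zero_add]

theorem e1_add_e2 : T.nm h 0 + T.nm (mc1 h) 0 = 1 := by
  apply psi_inj h T
  · rw [map_add, res_c1_e1, res_c1_e2, map_one, add_zero]
  · rw [map_add, res_c2_e1, res_c2_e2, map_one, zero_add]

theorem mul_e1 (a : T.obj V) : a * T.nm h 0 = T.tr (mc1 h) (T.res (mc1 h) a) := by
  rw [T.nm_zero h]
  calc a * T.tr (GSet.complIncl h) 1 = T.tr (GSet.complIncl h) 1 * a := mul_comm _ _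
    _ = T.tr (GSet.complIncl h) (1 * T.res (GSet.complIncl h) a) :=
        (T.proj_formula (GSet.complIncl h) 1 a).symm
    _ = T.tr (mc1 h) (T.res (mc1 h) a) := by rw [one_mul]

theorem mul_e2 (a : T.obj V) : a * T.nm (mc1 h) 0 = T.tr (mc2 h) (T.res (mc2 h) a) := by
  rw [T.nm_zero (mc1 h)]
  calc a * T.tr (GSet.complIncl (GSet.complIncl h)) 1
      = T.tr (GSet.complIncl (GSet.complIncl h)) 1 * a := mul_comm _ _
    _ = T.tr (GSet.complIncl (GSet.complIncl h)) (1 * T.res (GSet.complIncl (GSet.complIncl h)) a) :=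
        (T.proj_formula (GSet.complIncl (GSet.complIncl h)) 1 a).symm
    _ = T.tr (mc2 h) (T.res (mc2 h) a) := by rw [one_mul]

theorem mem_of_components {I : ∀ X : GSet G, Ideal (T.obj X)} (hI : T.IsIdeal I)
    {s : T.obj V} (h1 : T.res (mc1 h) s ∈ I _) (h2 : T.res (mc2 h) s ∈ I _) :
    s ∈ I V := by
  rw [decomp h T s]
  exact add_mem (hI.tr_mem _ h1) (hI.tr_mem _ h2)

end WithT
end Machinery2

section MainPrep
open TambaraFunctor GSet

variable {G : Type} [Group G]

/-- fold map X ⊔ X → X -/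
def foldX (X : GSet G) : GSetHom (X.sum X) X :=
  ⟨Sum.elim (fun a => a) (fun a => a), by rintro g (a|a) <;> rfl⟩

def k1invX (X : GSet G) : GSetHom X (GSet.compl (GSet.inr X X)) :=
  ⟨fun a => ⟨Sum.inl a, fun _ hw => Sum.inr_ne_inl hw⟩, fun _ _ => Subtype.ext rfl⟩

def k2invX (X : GSet G) : GSetHom X (GSet.compl (GSet.complIncl (GSet.inr X X))) :=
  ⟨fun a => ⟨Sum.inr a, fun γ hγ => γ.property a hγ.symm⟩, fun _ _ => Subtype.ext rfl⟩

theorem fold_k1 (X : GSet G) :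
    ((foldX X).comp (GSet.complIncl (GSet.inr X X))).comp (k1invX X) = GSetHom.id X :=
  GSetHom.ext' rfl

theorem fold_k2 (X : GSet G) :
    ((foldX X).comp (GSet.complIncl (GSet.complIncl (GSet.inr X X)))).comp (k2invX X) =
      GSetHom.id X :=
  GSetHom.ext' rfl

theorem c1S_val {X : GSet G} (γ : (GSet.compl (GSet.inr X X)).carrier) :
    ∃ a, γ.val = Sum.inl a := by
  cases hv : γ.val with
  | inl a => exact ⟨a, rfl⟩
  | inr b => exact absurd hv.symm (γ.property b)

theorem c2S_val {X : GSet G} (ω : (GSet.compl (GSet.complIncl (GSet.inr X X))).carrier) :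
    ∃ b, ω.val = Sum.inr b := by
  obtain ⟨w, hw⟩ := c2_char (GSet.inr X X) ω
  exact ⟨w, hw.symm⟩

variable {X Y : GSet G} (f : GSetHom X Y)

/-- the injection of all-`inl` sections -/
def JHom : GSetHom (GSet.piObj f (GSetHom.id X)) (GSet.piObj f (foldX X)) where
  toFun s := ⟨(s.val.1, fun x' => (s.val.2 x').map Sum.inl), by
    constructor
    · intro x'
      show ((s.val.2 x').map Sum.inl).isSome = true ↔ f.toFun x' = s.val.1
      rw [Option.isSome_map]
      exact s.property.1 x'
    · intro x' a ha
      obtain ⟨b, hb, rfl⟩ := Option.map_eq_some_iff.mp ha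
      exact s.property.2 x' b hb⟩
  map_smul g s := by
    apply Subtype.ext
    apply Prod.ext
    · rfl
    · funext x'
      show ((s.val.2 (g⁻¹ • x')).map (g • ·)).map Sum.inl
          = ((s.val.2 (g⁻¹ • x')).map Sum.inl).map (g • ·)
      cases s.val.2 (g⁻¹ • x') <;> rfl

theorem touch (cc : (GSet.compl (JHom f)).carrier) :
    ∃ x₀ b₀, cc.val.val.2 x₀ = some (show (X.sum X).carrier from Sum.inr b₀) := by
  by_contra hcon
  push_neg at hcon
  set y := cc.val.val.1
  set σ := cc.val.val.2 with hσ
  have hcase : ∀ x', σ x' = none ∨ ∃ a, σ x' = some (Sum.inl a) := by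
    intro x'
    cases hx : σ x' with
    | none => exact Or.inl rfl
    | some sv =>
      cases sv with
      | inl a => exact Or.inr ⟨a, rfl⟩
      | inr b => exact absurd hx (hcon x' b)
  set σ' : X.carrier → Option X.carrier :=
    fun x' => (σ x').bind (Sum.elim some fun _ => none) with hσ'
  have hsame : ∀ x', (σ' x').isSome = (σ x').isSome := by
    intro x'
    rcases hcase x' with hx | ⟨a, hx⟩ <;> rw [hσ'] <;> simp only [hx] <;> rfl
  have hmapback : ∀ x', (σ' x').map Sum.inl = σ x' := by
    intro x'
    rcases hcase x' with hx | ⟨a, hx⟩ <;> rw [hσ'] <;> simp only [hx] <;> rfl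
  refine cc.property ⟨(y, σ'), ?_, ?_⟩ ?_
  · intro x'
    rw [hsame]
    exact cc.val.property.1 x'
  · intro x' a ha
    rcases hcase x' with hx | ⟨b, hx⟩
    · rw [hσ'] at ha; simp only [hx] at ha; exact absurd ha (fun h => Option.some_ne_none a h.symm)
    · rw [hσ'] at ha; simp only [hx] at ha
      change some b = some a at ha
      obtain rfl : b = a := Option.some_injective _ ha
      exact cc.val.property.2 x' (Sum.inl b) hx
  · apply Subtype.ext
    apply Prod.ext
    · rfl
    · funext x'
      exact hmapback x'

theorem witness (cc : (GSet.compl (JHom f)).carrier) :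
    ∃ (z₁ : (GSet.pullback (GSet.pbSnd f (GSet.piPr f (foldX X)))
        (GSet.complIncl (JHom f))).carrier) (b₀ : X.carrier),
      (GSet.pbSnd (GSet.pbSnd f (GSet.piPr f (foldX X))) (GSet.complIncl (JHom f))).toFun z₁
          = cc ∧
      ((GSet.piEval f (foldX X)).comp
        (GSet.pbFst (GSet.pbSnd f (GSet.piPr f (foldX X))) (GSet.complIncl (JHom f)))).toFun z₁
          = Sum.inr b₀ := by
  obtain ⟨x₀, b₀, h₀⟩ := touch f cc
  have hfx : f.toFun x₀ = cc.val.val.1 := (cc.val.property.1 x₀).mp (by rw [h₀]; rfl)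
  refine ⟨⟨(⟨(x₀, cc.val), hfx⟩, cc), rfl⟩, b₀, rfl, ?_⟩
  exact GSet.optGet h₀ _

end MainPrep

section MainCongr
open TambaraFunctor GSet

variable {G : Type} [Group G]

/-- inverse of a bijective equivariant map -/
theorem iso_inv {A B : GSet G} (u : GSetHom A B) (hbij : Function.Bijective u.toFun) :
    ∃ v : GSetHom B A, u.comp v = GSetHom.id B ∧ v.comp u = GSetHom.id A := by
  classical
  choose vf hvf using fun b => hbij.2 b
  have hvmap : ∀ (g : G) (b : B.carrier), vf (g • b) = g • vf b := by
    intro g b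
    apply hbij.1
    rw [hvf, u.map_smul, hvf]
  exact ⟨⟨vf, hvmap⟩, GSetHom.ext' (funext hvf),
    GSetHom.ext' (funext fun a => hbij.1 (hvf (u.toFun a)))⟩

variable {X Y : GSet G} (f : GSetHom X Y)

noncomputable abbrev c1Sx (X : GSet G) := GSet.complIncl (GSet.inr X X)
noncomputable abbrev c2Sx (X : GSet G) := GSet.complIncl (c1Sx X)
noncomputable abbrev pif := GSet.piPr f (foldX X)
noncomputable abbrev gf := GSet.pbSnd f (pif f)
noncomputable abbrev lef := GSet.piEval f (foldX X)
noncomputable abbrev c1Pf := GSet.complIncl (JHom f)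
noncomputable abbrev c2Pf := GSet.complIncl (c1Pf f)
noncomputable abbrev g1f := GSet.pbSnd (gf f) (c1Pf f)
noncomputable abbrev q1f := GSet.pbFst (gf f) (c1Pf f)
noncomputable abbrev g2f := GSet.pbSnd (gf f) (c2Pf f)
noncomputable abbrev q2f := GSet.pbFst (gf f) (c2Pf f)
noncomputable abbrev l1f := (lef f).comp (q1f f)
noncomputable abbrev l2f := (lef f).comp (q2f f)
noncomputable abbrev nuB := GSet.pbSnd (c2Sx X) (l1f f)
noncomputable abbrev c1b := GSet.complIncl (nuB f)
noncomputable abbrev c2b := GSet.complIncl (c1b f)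
noncomputable abbrev thB := GSet.pbSnd (nuB f) (c2b f)

/-- the value of the evaluation map over an all-inl point is an inl -/
theorem lef_inl {z : (GSet.pullback f (pif f)).carrier}
    (γ₀ : (GSet.piObj f (GSetHom.id X)).carrier)
    (hz : z.val.2 = (JHom f).toFun γ₀) :
    ∃ a, (lef f).toFun z = Sum.inl a := by
  have hfz : f.toFun z.val.1 = γ₀.val.1 := by
    have := z.property
    rw [hz] at this
    exact this
  have hs : (γ₀.val.2 z.val.1).isSome = true := (γ₀.property.1 z.val.1).mpr hfz
  obtain ⟨a, ha⟩ := Option.isSome_iff_exists.mp hs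
  refine ⟨a, ?_⟩
  have key : z.val.2.val.2 z.val.1 = some (Sum.inl a) := by
    rw [hz]
    show (γ₀.val.2 z.val.1).map Sum.inl = _
    rw [ha]
    rfl
  exact GSet.optGet key _

theorem EA_empty : IsEmpty (GSet.pullback (c2Sx X) (l2f f)).carrier := by
  constructor
  rintro ⟨⟨w, ζ⟩, hq⟩
  obtain ⟨b, hb⟩ := c2S_val w
  obtain ⟨γ₀, hγ₀⟩ := c2_char (JHom f) ζ.val.2
  have hz : ζ.val.1.val.2 = (JHom f).toFun γ₀ := by
    rw [hγ₀]
    exact ζ.property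
  obtain ⟨a, ha⟩ := lef_inl f γ₀ hz
  have : Sum.inr b = Sum.inl a := by
    rw [← hb, ← ha]
    exact hq
  exact Sum.inr_ne_inl this

theorem EB1_empty : IsEmpty (GSet.PiCar (g1f f) (GSet.pbSnd (c1Sx X) (l1f f))) := by
  constructor
  rintro ⟨⟨cc, τ⟩, hτ1, hτ2⟩
  obtain ⟨z₁, b₀, hz, hb⟩ := witness f cc
  have hsome : (τ z₁).isSome = true := (hτ1 z₁).mpr hz
  obtain ⟨pa, hpa⟩ := Option.isSome_iff_exists.mp hsome
  have hκ : pa.val.2 = z₁ := hτ2 z₁ pa hpa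
  have hcontr : (c1Sx X).toFun pa.val.1 = Sum.inr b₀ := by
    have := pa.property
    rw [hκ] at this
    rw [this]
    exact hb
  obtain ⟨a, ha⟩ := c1S_val pa.val.1
  rw [show (c1Sx X).toFun pa.val.1 = pa.val.1.val from rfl, ha] at hcontr
  exact Sum.inl_ne_inr hcontr

theorem EI_empty : IsEmpty (GSet.pullback (c1Sx X) ((l1f f).comp (c2b f))).carrier := by
  constructor
  rintro ⟨⟨γ, ω₂⟩, hq⟩
  obtain ⟨pb, hpb⟩ := c2_char (nuB f) ω₂
  obtain ⟨b, hb⟩ := c2S_val pb.val.1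
  have hval : (l1f f).toFun ω₂.val = Sum.inr b := by
    rw [← hpb]
    show (l1f f).toFun pb.val.2 = _
    rw [← pb.property]
    exact hb
  obtain ⟨a, ha⟩ := c1S_val γ
  have : Sum.inl a = Sum.inr b := by
    rw [← ha, ← hval]
    exact hq
  exact Sum.inl_ne_inr this

theorem nuB_inj : Function.Injective (nuB f).toFun := by
  rintro ⟨⟨w, z⟩, hwz⟩ ⟨⟨w', z'⟩, hwz'⟩ hval
  have hz : z = z' := hval
  subst hz
  have : w = w' := Subtype.ext (by
    have h1 : w.val = (l1f f).toFun z := hwz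
    have h2 : w'.val = (l1f f).toFun z := hwz'
    rw [h1, h2])
  subst this
  rfl

theorem thB_bij : Function.Bijective (thB f).toFun := by
  constructor
  · rintro ⟨⟨pb, ω₂⟩, hq⟩ ⟨⟨pb', ω₂'⟩, hq'⟩ hval
    have hω : ω₂ = ω₂' := hval
    subst hω
    have : pb = pb' := nuB_inj f (by
      have h1 : (nuB f).toFun pb = ω₂.val := hq
      have h2 : (nuB f).toFun pb' = ω₂.val := hq'
      rw [h1, h2])
    subst this
    rfl
  · intro ω₂
    obtain ⟨pb, hpb⟩ := c2_char (nuB f) ω₂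
    exact ⟨⟨(pb, ω₂), hpb⟩, rfl⟩

theorem qbar_surj : Function.Surjective ((g1f f).comp (nuB f)).toFun := by
  intro cc
  obtain ⟨z₁, b₀, hz, hb⟩ := witness f cc
  refine ⟨⟨(⟨Sum.inr b₀, fun γ hγ => γ.property b₀ hγ.symm⟩, z₁), ?_⟩, ?_⟩
  · exact hb.symm
  · exact hz

end MainCongr

section TheCongruence
open TambaraFunctor GSet

variable {G : Type} [Group G]

theorem nm_add_sub_mem (T : TambaraFunctor G) {I : ∀ X : GSet G, Ideal (T.obj X)}
    (hI : T.IsIdeal I) {X Y : GSet G} (f : GSetHom X Y) (x d : T.obj X) (hd : d ∈ I X) :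
    T.nm f (x + d) - T.nm f x ∈ I Y := by
  classical
  set w1 := T.tr (k1invX X) x with hw1
  set w2 := T.tr (k2invX X) d with hw2
  set c0 := T.tr (c1Sx X) w1 with hc0
  set cd := T.tr (c2Sx X) w2 with hcd
  have htrc0 : T.tr (foldX X) c0 = x := by
    rw [hc0, hw1, T.tr_comp, T.tr_comp, fold_k1, T.tr_id]
  have htrcd : T.tr (foldX X) cd = d := by
    rw [hcd, hw2, T.tr_comp, T.tr_comp, fold_k2, T.tr_id]
  have hcdmem : cd ∈ I _ := hI.tr_mem _ (hI.tr_mem _ hd)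
  have main1 : T.nm f (x + d)
      = T.tr (pif f) (T.nm (gf f) (T.res (lef f) (c0 + cd))) := by
    have hxd : x + d = T.tr (foldX X) (c0 + cd) := by rw [map_add, htrc0, htrcd]
    rw [hxd]
    exact T.distrib f (foldX X) (c0 + cd)
  have main0 : T.nm f x
      = T.tr (pif f) (T.nm (gf f) (T.res (lef f) c0)) := by
    conv_lhs => rw [← htrc0]
    exact T.distrib f (foldX X) c0
  set R := T.nm (gf f) (T.res (lef f) (c0 + cd)) with hR
  set R0 := T.nm (gf f) (T.res (lef f) c0) with hR0
  rw [main1, main0, ← map_sub]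
  apply hI.tr_mem
  refine mem_of_components (JHom f) T hI ?_ ?_
  -- B part: the sections touching the second copy
  · have hcomp : T.res (mc1 (JHom f)) (R - R0)
        = T.nm (g1f f) (T.res (l1f f) (c0 + cd)) - T.nm (g1f f) (T.res (l1f f) c0) := by
      rw [map_sub, hR, hR0,
        T.nm_bc (gf f) (GSet.complIncl (JHom f)) (T.res (lef f) (c0 + cd)),
        T.nm_bc (gf f) (GSet.complIncl (JHom f)) (T.res (lef f) c0),
        T.res_comp, T.res_comp]
    rw [hcomp]
    -- the x-only term vanishes
    have hB0 : T.nm (g1f f) (T.res (l1f f) c0) = 0 := by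
      rw [hc0, T.tr_bc (c1Sx X) (l1f f) w1]
      rw [T.distrib (g1f f) (GSet.pbSnd (c1Sx X) (l1f f))]
      haveI : IsEmpty (GSet.piObj (g1f f) (GSet.pbSnd (c1Sx X) (l1f f))).carrier :=
        EB1_empty f
      exact tr_of_empty T _ _
    rw [hB0, sub_zero]
    -- now show the main term lies in the ideal
    set ρ := T.res (l1f f) (c0 + cd) with hρ
    set e1 := T.nm (nuB f) 0 with he1
    set e2 := T.nm (c1b f) 0 with he2
    have h12 : e1 + e2 = 1 := e1_add_e2 (nuB f) T
    have h0 : e1 * e2 = 0 := by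
      have hme := mul_e2 (nuB f) T e1
      rw [he1] at hme
      rw [res_c2_e1 (nuB f) T] at hme
      rw [AddMonoidHom.map_zero] at hme
      rw [he1, he2]
      exact hme
    have hι'eq : e2 * ρ = T.tr (mc2 (nuB f)) (T.res (mc2 (nuB f)) ρ) := by
      rw [mul_comm, he2]
      exact mul_e2 (nuB f) T ρ
    have hρ0zero : T.res (mc2 (nuB f)) (T.res (l1f f) c0) = 0 := by
      rw [hc0, T.res_comp, T.tr_bc (c1Sx X) ((l1f f).comp (mc2 (nuB f))) w1]
      haveI : IsEmpty (GSet.pullback (c1Sx X) ((l1f f).comp (mc2 (nuB f)))).carrier :=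
        EI_empty f
      exact tr_of_empty T _ _
    have hι'mem : e2 * ρ ∈ I _ := by
      rw [hρ, map_add, mul_add]
      refine add_mem ?_ ?_
      · have : e2 * T.res (l1f f) c0 = 0 := by
          rw [mul_comm, he2, mul_e2 (nuB f) T, hρ0zero, AddMonoidHom.map_zero]
        rw [this]
        exact zero_mem _
      · exact Ideal.mul_mem_left _ _ (hI.res_mem _ hcdmem)
    have hfactor : ρ = (e1 * ρ + e2) * (e1 + e2 * ρ) := by
      linear_combination (2*ρ - ρ^2 - 1) * h0 + (-(ρ*(e1 + e2 + 1))) * h12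
    -- the inverse diagonal trick
    obtain ⟨θinv, hθ1, hθ2⟩ := iso_inv (thB f) (thB_bij f)
    have hθinvsurj : Function.Surjective θinv.toFun := by
      intro p
      exact ⟨(thB f).toFun p, congrFun (congrArg GSetHom.toFun hθ2) p⟩
    set ι2 := T.res (mc2 (nuB f)) (e2 * ρ) with hι2
    set ιs2 := T.res θinv (T.nm θinv ι2) with hιs2
    have hιs2mem : ιs2 ∈ I _ := by
      refine hI.res_mem _ (nm_mem_of_surj T hI θinv hθinvsurj ?_)
      exact hI.res_mem _ hι'mem
    set ιs := T.tr (mc2 (nuB f)) ιs2 with hιs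
    have hιsmem : ιs ∈ I _ := hI.tr_mem _ hιs2mem
    have hKEY : T.nm (nuB f) (T.res (nuB f) ιs) = e1 + e2 * ρ := by
      apply psi_inj (nuB f) T
      · rw [T.nm_bc (nuB f) (mc1 (nuB f)) (T.res (nuB f) ιs)]
        have hL : T.nm (GSet.pbSnd (nuB f) (mc1 (nuB f)))
            (T.res (GSet.pbFst (nuB f) (mc1 (nuB f))) (T.res (nuB f) ιs)) = 1 :=
          nm_of_empty T _ _
        rw [hL, map_add, he1, res_c1_e1 (nuB f) T, hι'eq, res_c1_tr_c2 (nuB f) T, add_zero]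
      · rw [T.nm_bc (nuB f) (mc2 (nuB f)) (T.res (nuB f) ιs)]
        have hsq : (nuB f).comp (GSet.pbFst (nuB f) (mc2 (nuB f)))
            = (mc2 (nuB f)).comp (thB f) :=
          GSetHom.ext' (funext fun q => q.property)
        have hres : T.res (GSet.pbFst (nuB f) (mc2 (nuB f))) (T.res (nuB f) ιs)
            = T.nm θinv ι2 := by
          rw [T.res_comp, hsq, ← T.res_comp]
          have h1 : T.res (mc2 (nuB f)) ιs = ιs2 := by
            rw [hιs]
            exact res_c2_tr_c2 (nuB f) T ιs2
          rw [h1, hιs2, T.res_comp, hθ2, T.res_id]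
        rw [hres]
        have hfin : T.nm (GSet.pbSnd (nuB f) (mc2 (nuB f))) (T.nm θinv ι2) = ι2 := by
          have hth : T.nm (thB f) (T.nm θinv ι2) = ι2 := by
            rw [T.nm_comp, hθ1, T.nm_id]
          exact hth
        rw [hfin, map_add, he1, res_c2_e1 (nuB f) T, zero_add, hι2]
    have hmain : T.nm (g1f f) ρ ∈ I _ := by
      rw [hfactor, map_mul]
      refine Ideal.mul_mem_left _ _ ?_
      rw [← hKEY, T.nm_comp]
      exact nm_mem_of_surj T hI _ (qbar_surj f) (hI.res_mem _ hιsmem)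
    exact hmain
  -- A part: the all-inl sections, where the difference restricts to zero
  · have hcomp : T.res (mc2 (JHom f)) (R - R0) = 0 := by
      rw [map_sub, hR, hR0,
        T.nm_bc (gf f) (GSet.complIncl (GSet.complIncl (JHom f))) (T.res (lef f) (c0 + cd)),
        T.nm_bc (gf f) (GSet.complIncl (GSet.complIncl (JHom f))) (T.res (lef f) c0),
        T.res_comp, T.res_comp]
      have hcd0 : T.res ((lef f).comp (GSet.pbFst (gf f)
          (GSet.complIncl (GSet.complIncl (JHom f))))) cd = 0 := by
        rw [hcd, T.tr_bc (c2Sx X) _ w2]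
        haveI : IsEmpty (GSet.pullback (c2Sx X) ((lef f).comp (GSet.pbFst (gf f)
            (GSet.complIncl (GSet.complIncl (JHom f)))))).carrier := EA_empty f
        exact tr_of_empty T _ _
      rw [map_add, hcd0, add_zero, sub_self]
    rw [hcomp]
    exact zero_mem _

end TheCongruence

section QuotientConstr
open TambaraFunctor GSet

variable {G : Type} [Group G]

theorem nm_congr (T : TambaraFunctor G) {I : ∀ X : GSet G, Ideal (T.obj X)}
    (hI : T.IsIdeal I) {X Y : GSet G} (f : GSetHom X Y) (x y : T.obj X)
    (hxy : x - y ∈ I X) : T.nm f x - T.nm f y ∈ I Y := by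
  have h := nm_add_sub_mem T hI f y (x - y) hxy
  have hyx : y + (x - y) = x := by ring
  rwa [hyx] at h

/- general sum helpers -/
def k1invAB (A B : GSet G) : GSetHom A (GSet.compl (GSet.inr A B)) :=
  ⟨fun a => ⟨Sum.inl a, fun _ hw => Sum.inr_ne_inl hw⟩, fun _ _ => Subtype.ext rfl⟩

def k2invAB (A B : GSet G) : GSetHom B (GSet.compl (GSet.complIncl (GSet.inr A B))) :=
  ⟨fun b => ⟨Sum.inr b, fun γ hγ => γ.property b hγ.symm⟩, fun _ _ => Subtype.ext rfl⟩

theorem c1AB_val {A B : GSet G} (γ : (GSet.compl (GSet.inr A B)).carrier) :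
    ∃ a, γ.val = Sum.inl a := by
  cases hv : γ.val with
  | inl a => exact ⟨a, rfl⟩
  | inr b => exact absurd hv.symm (γ.property b)

theorem c2AB_val {A B : GSet G} (ω : (GSet.compl (GSet.complIncl (GSet.inr A B))).carrier) :
    ∃ b, ω.val = Sum.inr b := by
  obtain ⟨w, hw⟩ := c2_char (GSet.inr A B) ω
  exact ⟨w, hw.symm⟩

theorem k1invAB_bij (A B : GSet G) : Function.Bijective (k1invAB A B).toFun := by
  constructor
  · intro a b hab
    have := congrArg Subtype.val hab
    exact Sum.inl_injective this
  · intro ω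
    obtain ⟨a, ha⟩ := c1AB_val ω
    exact ⟨a, Subtype.ext ha.symm⟩

theorem k2invAB_bij (A B : GSet G) : Function.Bijective (k2invAB A B).toFun := by
  constructor
  · intro a b hab
    have := congrArg Subtype.val hab
    exact Sum.inr_injective this
  · intro ω
    obtain ⟨b, hb⟩ := c2AB_val ω
    exact ⟨b, Subtype.ext hb.symm⟩

theorem sum_ideal_mem (T : TambaraFunctor G) {I : ∀ X : GSet G, Ideal (T.obj X)}
    (hI : T.IsIdeal I) {A B : GSet G} {s : T.obj (A.sum B)}
    (h1 : T.res (GSet.inl A B) s ∈ I A) (h2 : T.res (GSet.inr A B) s ∈ I B) :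
    s ∈ I (A.sum B) := by
  refine mem_of_components (GSet.inr A B) T hI ?_ ?_
  · obtain ⟨m', hm1, hm2⟩ := iso_inv (k1invAB A B) (k1invAB_bij A B)
    have hcomp : (GSet.inl A B).comp m' = mc1 (GSet.inr A B) := by
      apply GSetHom.ext'
      funext ω
      have := congrArg Subtype.val (congrFun (congrArg GSetHom.toFun hm1) ω)
      exact this
    have : T.res (mc1 (GSet.inr A B)) s = T.res m' (T.res (GSet.inl A B) s) := by
      rw [T.res_comp, hcomp]
    rw [this]
    exact hI.res_mem _ h1
  · obtain ⟨m', hm1, hm2⟩ := iso_inv (k2invAB A B) (k2invAB_bij A B)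
    have hcomp : (GSet.inr A B).comp m' = mc2 (GSet.inr A B) := by
      apply GSetHom.ext'
      funext ω
      have := congrArg Subtype.val (congrFun (congrArg GSetHom.toFun hm1) ω)
      exact this
    have : T.res (mc2 (GSet.inr A B)) s = T.res m' (T.res (GSet.inr A B) s) := by
      rw [T.res_comp, hcomp]
    rw [this]
    exact hI.res_mem _ h2

variable (T : TambaraFunctor G) {I : ∀ X : GSet G, Ideal (T.obj X)} (hI : T.IsIdeal I)

noncomputable def qres {X Y : GSet G} (f : GSetHom X Y) :
    (T.obj Y ⧸ I Y) →+* (T.obj X ⧸ I X) :=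
  Ideal.Quotient.lift (I Y) ((Ideal.Quotient.mk (I X)).comp (T.res f))
    (fun a ha => by
      rw [RingHom.comp_apply, Ideal.Quotient.eq_zero_iff_mem]
      exact hI.res_mem f ha)

theorem qres_mk {X Y : GSet G} (f : GSetHom X Y) (a : T.obj Y) :
    qres T hI f (Ideal.Quotient.mk (I Y) a) = Ideal.Quotient.mk (I X) (T.res f a) := rfl

noncomputable def qtr {X Y : GSet G} (f : GSetHom X Y) :
    (T.obj X ⧸ I X) →+ (T.obj Y ⧸ I Y) where
  toFun q := Quotient.liftOn' q (fun a => Ideal.Quotient.mk (I Y) (T.tr f a))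
    (fun a b hab => by
      have h : a - b ∈ I X := by rwa [Submodule.quotientRel_def] at hab
      rw [Ideal.Quotient.eq, ← map_sub]
      exact hI.tr_mem f h)
  map_zero' := by
    have h0 : (0 : T.obj X ⧸ I X) = Ideal.Quotient.mk (I X) 0 := (map_zero _).symm
    rw [h0]
    show Ideal.Quotient.mk (I Y) (T.tr f 0) = 0
    rw [map_zero, map_zero]
  map_add' q1 q2 := by
    obtain ⟨a, rfl⟩ := Ideal.Quotient.mk_surjective q1
    obtain ⟨b, rfl⟩ := Ideal.Quotient.mk_surjective q2
    rw [← map_add]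
    show Ideal.Quotient.mk (I Y) (T.tr f (a + b)) =
      Ideal.Quotient.mk (I Y) (T.tr f a) + Ideal.Quotient.mk (I Y) (T.tr f b)
    rw [map_add, map_add]

theorem qtr_mk {X Y : GSet G} (f : GSetHom X Y) (a : T.obj X) :
    qtr T hI f (Ideal.Quotient.mk (I X) a) = Ideal.Quotient.mk (I Y) (T.tr f a) := rfl

noncomputable def qnm {X Y : GSet G} (f : GSetHom X Y) :
    (T.obj X ⧸ I X) →* (T.obj Y ⧸ I Y) where
  toFun q := Quotient.liftOn' q (fun a => Ideal.Quotient.mk (I Y) (T.nm f a))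
    (fun a b hab => by
      have h : a - b ∈ I X := by rwa [Submodule.quotientRel_def] at hab
      rw [Ideal.Quotient.eq]
      exact nm_congr T hI f a b h)
  map_one' := by
    have h1 : (1 : T.obj X ⧸ I X) = Ideal.Quotient.mk (I X) 1 := (map_one _).symm
    rw [h1]
    show Ideal.Quotient.mk (I Y) (T.nm f 1) = 1
    rw [map_one, map_one]
  map_mul' q1 q2 := by
    obtain ⟨a, rfl⟩ := Ideal.Quotient.mk_surjective q1
    obtain ⟨b, rfl⟩ := Ideal.Quotient.mk_surjective q2
    rw [← map_mul]
    show Ideal.Quotient.mk (I Y) (T.nm f (a * b)) =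
      Ideal.Quotient.mk (I Y) (T.nm f a) * Ideal.Quotient.mk (I Y) (T.nm f b)
    rw [map_mul, map_mul]

theorem qnm_mk {X Y : GSet G} (f : GSetHom X Y) (a : T.obj X) :
    qnm T hI f (Ideal.Quotient.mk (I X) a) = Ideal.Quotient.mk (I Y) (T.nm f a) := rfl

noncomputable def qTam : TambaraFunctor G where
  obj X := T.obj X ⧸ I X
  ring X := inferInstance
  res := qres T hI
  tr := qtr T hI
  nm := qnm T hI
  res_id {X} q := by
    obtain ⟨a, rfl⟩ := Ideal.Quotient.mk_surjective q
    rw [qres_mk, T.res_id]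
  res_comp {X Y Z} f g q := by
    obtain ⟨a, rfl⟩ := Ideal.Quotient.mk_surjective q
    rw [qres_mk, qres_mk, qres_mk, T.res_comp]
  tr_id {X} q := by
    obtain ⟨a, rfl⟩ := Ideal.Quotient.mk_surjective q
    rw [qtr_mk, T.tr_id]
  tr_comp {X Y Z} f g q := by
    obtain ⟨a, rfl⟩ := Ideal.Quotient.mk_surjective q
    rw [qtr_mk, qtr_mk, qtr_mk, T.tr_comp]
  nm_id {X} q := by
    obtain ⟨a, rfl⟩ := Ideal.Quotient.mk_surjective q
    rw [qnm_mk, T.nm_id]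
  nm_comp {X Y Z} f g q := by
    obtain ⟨a, rfl⟩ := Ideal.Quotient.mk_surjective q
    rw [qnm_mk, qnm_mk, qnm_mk, T.nm_comp]
  add_bij A B := by
    constructor
    · intro s t hst
      obtain ⟨a, rfl⟩ := Ideal.Quotient.mk_surjective s
      obtain ⟨b, rfl⟩ := Ideal.Quotient.mk_surjective t
      simp only [qres_mk, Prod.mk.injEq] at hst
      obtain ⟨h1, h2⟩ := hst
      rw [Ideal.Quotient.eq] at h1 h2 ⊢
      rw [← map_sub] at h1 h2
      exact sum_ideal_mem T hI h1 h2
    · rintro ⟨s, t⟩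
      obtain ⟨a, rfl⟩ := Ideal.Quotient.mk_surjective s
      obtain ⟨b, rfl⟩ := Ideal.Quotient.mk_surjective t
      obtain ⟨u, hu⟩ := (T.add_bij A B).2 (a, b)
      refine ⟨Ideal.Quotient.mk _ u, ?_⟩
      simp only [qres_mk, Prod.mk.injEq]
      constructor
      · rw [show T.res (GSet.inl A B) u = a from congrArg Prod.fst hu]
      · rw [show T.res (GSet.inr A B) u = b from congrArg Prod.snd hu]
  empty_subsingleton s t := by
    obtain ⟨a, rfl⟩ := Ideal.Quotient.mk_surjective s
    obtain ⟨b, rfl⟩ := Ideal.Quotient.mk_surjective t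
    rw [T.empty_subsingleton a b]
  tr_bc {X Y Z} f g q := by
    obtain ⟨a, rfl⟩ := Ideal.Quotient.mk_surjective q
    rw [qtr_mk, qres_mk, T.tr_bc, qres_mk, qtr_mk]
  nm_bc {X Y Z} f g q := by
    obtain ⟨a, rfl⟩ := Ideal.Quotient.mk_surjective q
    rw [qnm_mk, qres_mk, T.nm_bc, qres_mk, qnm_mk]
  proj_formula {X Y} f a b := by
    obtain ⟨u, rfl⟩ := Ideal.Quotient.mk_surjective a
    obtain ⟨v, rfl⟩ := Ideal.Quotient.mk_surjective b
    rw [qres_mk, ← map_mul, qtr_mk, qtr_mk, ← map_mul, T.proj_formula]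
  nm_zero {X Y} f := by
    have h0 : (0 : T.obj X ⧸ I X) = Ideal.Quotient.mk (I X) 0 := (map_zero _).symm
    have h1 : (1 : T.obj (GSet.compl f) ⧸ I (GSet.compl f))
        = Ideal.Quotient.mk (I (GSet.compl f)) 1 := (map_one _).symm
    rw [h0, h1, qnm_mk, qtr_mk, T.nm_zero]
  distrib {X Y A} f p a := by
    obtain ⟨u, rfl⟩ := Ideal.Quotient.mk_surjective a
    rw [qtr_mk, qnm_mk, T.distrib, qres_mk, qnm_mk, qtr_mk]

end QuotientConstr

/-- the quotient of a Tambara functor by an ideal is a Tambara functor, the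
projections form a morphism of Tambara functors, and in particular the induced
multiplicative transfer `f_•(x + 𝔦(X)) = f_•(x) + 𝔦(Y)` is well defined. -/
theorem quotient_tambara (G : Type) [Group G] [Finite G] (T : TambaraFunctor G)
    (I : ∀ X : GSet G, Ideal (T.obj X)) (hI : T.IsIdeal I) :
    (∀ {X Y : GSet G} (f : GSetHom X Y) (x y : T.obj X),
        x - y ∈ I X → T.nm f x - T.nm f y ∈ I Y) ∧
    ∃ (Q : TambaraFunctor G) (p : TamHom T Q),
      (∀ X : GSet G, Function.Surjective (p.app X)) ∧
      (∀ (X : GSet G) (x : T.obj X), p.app X x = 0 ↔ x ∈ I X) := by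
  constructor
  · intro X Y f x y hxy
    exact nm_congr T hI f x y hxy
  · refine ⟨qTam T hI, ⟨fun X => Ideal.Quotient.mk (I X), ?_, ?_, ?_⟩,
      fun X => Ideal.Quotient.mk_surjective, fun X x => Ideal.Quotient.eq_zero_iff_mem⟩
    · intro X Y f y
      rfl
    · intro X Y f x
      rfl
    · intro X Y f x
      rfl
end

section
/- Let φ : T → S be a morphism of Tambara functors on a finite group G. Then Im φ, given by (Im φ)(X) = Im(φ_X), is a Tambara subfunctor of S, and there is a natural isomorphism of Tambara functors T/Ker φ ≅ Im φ compatible with φ and the projection T → T/Ker φ. -/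
set_option autoImplicit false

namespace ImProof

variable {G : Type} [Group G] {T S : TambaraFunctor G} (phi : TamHom T S)

theorem resMem {X Y : GSet G} (f : GSetHom X Y) {y : S.obj Y}
    (hy : y ∈ Set.range (phi.app Y)) : S.res f y ∈ Set.range (phi.app X) := by
  obtain ⟨t, rfl⟩ := hy
  exact ⟨T.res f t, phi.app_res f t⟩

theorem trMem {X Y : GSet G} (f : GSetHom X Y) {x : S.obj X}
    (hx : x ∈ Set.range (phi.app X)) : S.tr f x ∈ Set.range (phi.app Y) := by
  obtain ⟨t, rfl⟩ := hx
  exact ⟨T.tr f t, phi.app_tr f t⟩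

theorem nmMem {X Y : GSet G} (f : GSetHom X Y) {x : S.obj X}
    (hx : x ∈ Set.range (phi.app X)) : S.nm f x ∈ Set.range (phi.app Y) := by
  obtain ⟨t, rfl⟩ := hx
  exact ⟨T.nm f t, phi.app_nm f t⟩

/-- The image of `phi` at `X`, as a subring of `S(X)`. -/
def imObj (X : GSet G) : Subring (S.obj X) := (phi.app X).range

theorem mem_imObj {X : GSet G} {y : S.obj X} :
    y ∈ imObj phi X ↔ y ∈ Set.range (phi.app X) := by
  simp [imObj, RingHom.mem_range, Set.mem_range]

/-- The image Tambara functor. -/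
def imTam : TambaraFunctor G where
  obj X := imObj phi X
  ring X := inferInstance
  res {X Y} f := RingHom.codRestrict ((S.res f).comp (imObj phi Y).subtype)
    (imObj phi X) (fun y => (mem_imObj phi).2 (resMem phi f ((mem_imObj phi).1 y.2)))
  tr {X Y} f :=
    { toFun := fun x => ⟨S.tr f x.1, (mem_imObj phi).2 (trMem phi f ((mem_imObj phi).1 x.2))⟩
      map_zero' := Subtype.ext (by simp)
      map_add' := fun a b => Subtype.ext (by simp) }
  nm {X Y} f :=
    { toFun := fun x => ⟨S.nm f x.1, (mem_imObj phi).2 (nmMem phi f ((mem_imObj phi).1 x.2))⟩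
      map_one' := Subtype.ext (by simp)
      map_mul' := fun a b => Subtype.ext (by simp) }
  res_id x := Subtype.ext (S.res_id x.1)
  res_comp f g z := Subtype.ext (S.res_comp f g z.1)
  tr_id x := Subtype.ext (S.tr_id x.1)
  tr_comp f g x := Subtype.ext (S.tr_comp f g x.1)
  nm_id x := Subtype.ext (S.nm_id x.1)
  nm_comp f g x := Subtype.ext (S.nm_comp f g x.1)
  add_bij X Y := by
    constructor
    · intro a b h
      have h1 := congrArg (fun p => (p.1.1, p.2.1)) h
      exact Subtype.ext ((S.add_bij X Y).1 (a₁ := a.1) (a₂ := b.1) (by simpa using h1))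
    · rintro ⟨a, b⟩
      obtain ⟨u, hu⟩ := (mem_imObj phi).1 a.2
      obtain ⟨v, hv⟩ := (mem_imObj phi).1 b.2
      obtain ⟨t, ht⟩ := (T.add_bij X Y).2 (u, v)
      have h1 : T.res (GSet.inl X Y) t = u := congrArg Prod.fst ht
      have h2 : T.res (GSet.inr X Y) t = v := congrArg Prod.snd ht
      refine ⟨⟨phi.app _ t, (mem_imObj phi).2 ⟨t, rfl⟩⟩, ?_⟩
      refine Prod.ext (Subtype.ext ?_) (Subtype.ext ?_)
      · show S.res (GSet.inl X Y) (phi.app _ t) = a.1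
        rw [← phi.app_res, h1, hu]
      · show S.res (GSet.inr X Y) (phi.app _ t) = b.1
        rw [← phi.app_res, h2, hv]
  empty_subsingleton x y := Subtype.ext (S.empty_subsingleton x.1 y.1)
  tr_bc f g x := Subtype.ext (S.tr_bc f g x.1)
  nm_bc f g x := Subtype.ext (S.nm_bc f g x.1)
  proj_formula f a b := Subtype.ext (S.proj_formula f a.1 b.1)
  nm_zero f := Subtype.ext (S.nm_zero f)
  distrib f p a := Subtype.ext (S.distrib f p a.1)

/-- The projection `T → Im φ`. -/
def qHom : TamHom T (imTam phi) where
  app X := RingHom.codRestrict (phi.app X) (imObj phi X)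
    (fun x => (mem_imObj phi).2 ⟨x, rfl⟩)
  app_res f y := Subtype.ext (phi.app_res f y)
  app_tr f x := Subtype.ext (phi.app_tr f x)
  app_nm f x := Subtype.ext (phi.app_nm f x)

/-- The inclusion `Im φ → S`. -/
def iotaHom : TamHom (imTam phi) S where
  app X := (imObj phi X).subtype
  app_res _ _ := rfl
  app_tr _ _ := rfl
  app_nm _ _ := rfl

end ImProof

/-- the image of a morphism of Tambara functors is a Tambara subfunctor,
and `T/Ker φ ≅ Im φ` compatibly with `φ` and the projection. Here the subfunctor and the
isomorphism are encoded by a Tambara functor `Q` with a levelwise surjective morphism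
`q : T → Q` with kernel `Ker φ` and a levelwise injective morphism `ι : Q → S` with image
`Im φ`, such that `ι ∘ q = φ`. -/
theorem image_subfunctor_and_first_isomorphism (G : Type) [Group G] [Finite G]
    (T S : TambaraFunctor G) (phi : TamHom T S) :
    (∀ {X Y : GSet G} (f : GSetHom X Y),
      (∀ y ∈ Set.range (phi.app Y), S.res f y ∈ Set.range (phi.app X)) ∧
      (∀ x ∈ Set.range (phi.app X), S.tr f x ∈ Set.range (phi.app Y)) ∧
      (∀ x ∈ Set.range (phi.app X), S.nm f x ∈ Set.range (phi.app Y))) ∧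
    ∃ (Q : TambaraFunctor G) (q : TamHom T Q) (iota : TamHom Q S),
      (∀ X : GSet G, Function.Surjective (q.app X)) ∧
      (∀ X : GSet G, Function.Injective (iota.app X)) ∧
      (∀ X : GSet G, Set.range (iota.app X) = Set.range (phi.app X)) ∧
      (∀ (X : GSet G) (x : T.obj X), iota.app X (q.app X x) = phi.app X x) ∧
      (∀ (X : GSet G) (x : T.obj X), q.app X x = 0 ↔ phi.app X x = 0) := by
  refine ⟨fun f => ⟨fun y hy => ImProof.resMem phi f hy,
      fun x hx => ImProof.trMem phi f hx, fun x hx => ImProof.nmMem phi f hx⟩,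
    ImProof.imTam phi, ImProof.qHom phi, ImProof.iotaHom phi, ?_, ?_, ?_, ?_, ?_⟩
  · intro X y
    obtain ⟨t, ht⟩ := (ImProof.mem_imObj phi).1 y.2
    exact ⟨t, Subtype.ext ht⟩
  · intro X a b h
    exact Subtype.ext h
  · intro X
    ext y
    constructor
    · rintro ⟨z, rfl⟩
      exact (ImProof.mem_imObj phi).1 z.2
    · intro hy
      exact ⟨⟨y, (ImProof.mem_imObj phi).2 hy⟩, rfl⟩
  · intro X x
    rfl
  · intro X x
    exact ⟨fun h => congrArg Subtype.val h, fun h => Subtype.ext h⟩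
end

section
/- Let T be a Tambara functor on a finite group G, and let I ⊆ T(G/e) be a G-invariant ideal of the ring T(G/e). Define 𝔦_I(X) = ⋂_{γ ∈ G-Set(G/e, X)} (γ*)⁻¹(I) for each finite G-set X. Then 𝔦_I is an ideal of T with 𝔦_I(G/e) = I, and it is the largest ideal 𝔦 of T satisfying 𝔦(G/e) = I. -/
set_option autoImplicit false

set_option linter.unusedSectionVars false
set_option maxHeartbeats 1000000
section Mach
variable {G : Type} [Group G]

theorem ghext {X Y : GSet G} {f g : GSetHom X Y} (h : ∀ x, f.toFun x = g.toFun x) : f = g := by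
  cases f; cases g; simp only [GSetHom.mk.injEq]; funext x; exact h x

/-- Abstract pullback-shaped G-set, definitionally equal to `GSet.pullback` when the
predicate is the pullback predicate. -/
def pbGSet (X Y : GSet G) (P : X.carrier × Y.carrier → Prop)
    (hs : ∀ (a : G) (q : X.carrier × Y.carrier), P q → P (a • q)) : GSet G where
  carrier := { q : X.carrier × Y.carrier // P q }
  mulAction :=
  { smul := fun a q => ⟨a • q.val, hs a q.val q.property⟩
    one_smul := fun q => Subtype.ext (one_smul G q.val)
    mul_smul := fun a b q => Subtype.ext (mul_smul a b q.val) }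

def pbF (X Y : GSet G) (P : X.carrier × Y.carrier → Prop)
    (hs : ∀ (a : G) (q : X.carrier × Y.carrier), P q → P (a • q)) :
    GSetHom (pbGSet X Y P hs) X := ⟨fun q => q.val.1, fun _ _ => rfl⟩

def pbS (X Y : GSet G) (P : X.carrier × Y.carrier → Prop)
    (hs : ∀ (a : G) (q : X.carrier × Y.carrier), P q → P (a • q)) :
    GSetHom (pbGSet X Y P hs) Y := ⟨fun q => q.val.2, fun _ _ => rfl⟩

theorem pb_congr {X Y : GSet G} {P₁ P₂ : X.carrier × Y.carrier → Prop}
    (hs₁ : ∀ (a : G) (q : X.carrier × Y.carrier), P₁ q → P₁ (a • q))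
    (hs₂ : ∀ (a : G) (q : X.carrier × Y.carrier), P₂ q → P₂ (a • q))
    (hP : P₁ = P₂) :
    pbGSet X Y P₁ hs₁ = pbGSet X Y P₂ hs₂ ∧
      HEq (pbF X Y P₁ hs₁) (pbF X Y P₂ hs₂) ∧ HEq (pbS X Y P₁ hs₁) (pbS X Y P₂ hs₂) := by
  subst hP
  exact ⟨rfl, HEq.rfl, HEq.rfl⟩

-- test: pullback defeq pbGSet
example {X Y Z : GSet G} (f : GSetHom X Z) (g : GSetHom Y Z)
    (hs : ∀ (a : G) (q : X.carrier × Y.carrier),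
      (fun q : X.carrier × Y.carrier => f.toFun q.1 = g.toFun q.2) q →
      (fun q : X.carrier × Y.carrier => f.toFun q.1 = g.toFun q.2) (a • q)) :
    GSet.pullback f g = pbGSet X Y (fun q => f.toFun q.1 = g.toFun q.2) hs := rfl

example {X Y Z : GSet G} (f : GSetHom X Z) (g : GSetHom Y Z)
    (hs : ∀ (a : G) (q : X.carrier × Y.carrier),
      (fun q : X.carrier × Y.carrier => f.toFun q.1 = g.toFun q.2) q →
      (fun q : X.carrier × Y.carrier => f.toFun q.1 = g.toFun q.2) (a • q)) :
    HEq (GSet.pbSnd f g) (pbS X Y (fun q => f.toFun q.1 = g.toFun q.2) hs) := HEq.rfl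

end Mach

section Mach2
variable {G : Type} [Group G]

namespace TambaraFunctor

theorem tr_cast (T : TambaraFunctor G) {A B X Y : GSet G} (hAB : A = B)
    {pA : GSetHom A Y} {pB : GSetHom B Y} {qA : GSetHom A X} {qB : GSetHom B X}
    (h1 : HEq pA pB) (h2 : HEq qA qB) (x : T.obj X) :
    T.tr pA (T.res qA x) = T.tr pB (T.res qB x) := by
  subst hAB
  rw [eq_of_heq h1, eq_of_heq h2]

theorem nm_cast (T : TambaraFunctor G) {A B X Y : GSet G} (hAB : A = B)
    {pA : GSetHom A Y} {pB : GSetHom B Y} {qA : GSetHom A X} {qB : GSetHom B X}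
    (h1 : HEq pA pB) (h2 : HEq qA qB) (x : T.obj X) :
    T.nm pA (T.res qA x) = T.nm pB (T.res qB x) := by
  subst hAB
  rw [eq_of_heq h1, eq_of_heq h2]

variable (T : TambaraFunctor G)

private theorem stab {X Y Z : GSet G} (f : GSetHom X Z) (g : GSetHom Y Z) :
    ∀ (a : G) (q : X.carrier × Y.carrier),
      (fun q : X.carrier × Y.carrier => f.toFun q.1 = g.toFun q.2) q →
      (fun q : X.carrier × Y.carrier => f.toFun q.1 = g.toFun q.2) (a • q) := by
  intro a q hq
  show f.toFun (a • q.1) = g.toFun (a • q.2)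
  rw [f.map_smul, g.map_smul, hq]

theorem pullback_diag_eq {X Z : GSet G} (f g : GSetHom X Z)
    (hfg : ∀ x y : X.carrier, f.toFun x = g.toFun y ↔ x = y) :
    GSet.pullback f g = GSet.pullback (GSetHom.id X) (GSetHom.id X) ∧
      HEq (GSet.pbFst f g) (GSet.pbFst (GSetHom.id X) (GSetHom.id X)) ∧
      HEq (GSet.pbSnd f g) (GSet.pbSnd (GSetHom.id X) (GSetHom.id X)) := by
  have hP : (fun q : X.carrier × X.carrier => f.toFun q.1 = g.toFun q.2)
      = (fun q : X.carrier × X.carrier => (GSetHom.id X).toFun q.1 = (GSetHom.id X).toFun q.2) := by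
    funext q
    exact propext (hfg q.1 q.2)
  exact pb_congr (stab f g) (stab (GSetHom.id X) (GSetHom.id X)) hP

theorem bc_cancel_tr {X Z : GSet G} (f g : GSetHom X Z)
    (hfg : ∀ x y : X.carrier, f.toFun x = g.toFun y ↔ x = y) (t : T.obj X) :
    T.tr (GSet.pbSnd f g) (T.res (GSet.pbFst f g) t) = t := by
  obtain ⟨hE, h1, h2⟩ := pullback_diag_eq f g hfg
  rw [T.tr_cast hE h2 h1]
  have ground := T.tr_bc (GSetHom.id X) (GSetHom.id X) t
  rw [T.tr_id] at ground
  have : T.res (GSetHom.id X) t = t := T.res_id t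
  rw [this] at ground
  exact ground.symm

theorem bc_cancel_nm {X Z : GSet G} (f g : GSetHom X Z)
    (hfg : ∀ x y : X.carrier, f.toFun x = g.toFun y ↔ x = y) (t : T.obj X) :
    T.nm (GSet.pbSnd f g) (T.res (GSet.pbFst f g) t) = t := by
  obtain ⟨hE, h1, h2⟩ := pullback_diag_eq f g hfg
  rw [T.nm_cast hE h2 h1]
  have ground := T.nm_bc (GSetHom.id X) (GSetHom.id X) t
  rw [T.nm_id] at ground
  have : T.res (GSetHom.id X) t = t := T.res_id t
  rw [this] at ground
  exact ground.symm

/-- objects with empty carrier have subsingleton rings -/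
theorem obj_subsingleton {E : GSet G} (hE : E.carrier → False) (x y : T.obj E) : x = y := by
  let u : GSetHom E (GSet.empty G) := ⟨fun q => (hE q).elim, fun g q => (hE q).elim⟩
  let v : GSetHom (GSet.empty G) E := ⟨fun e => e.elim, fun g e => e.elim⟩
  have hv : v.comp u = GSetHom.id E := ghext (fun q => (hE q).elim)
  have hx : x = T.res u (T.res v x) := by rw [T.res_comp, hv, T.res_id]
  have hy : y = T.res u (T.res v y) := by rw [T.res_comp, hv, T.res_id]
  rw [hx, hy, T.empty_subsingleton (T.res v x) (T.res v y)]

/-- transport of `tr` along an isomorphism -/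
theorem tr_iso {X Y : GSet G} (f : GSetHom X Y) (f' : GSetHom Y X)
    (h1 : ∀ x, f'.toFun (f.toFun x) = x) (h2 : ∀ y, f.toFun (f'.toFun y) = y)
    (x : T.obj X) : T.tr f x = T.res f' x := by
  have hd : ∀ a b : X.carrier, f.toFun a = f.toFun b ↔ a = b := by
    intro a b
    constructor
    · intro h; rw [← h1 a, h, h1 b]
    · intro h; rw [h]
  have key : T.res f (T.tr f x) = x := by
    rw [T.tr_bc f f x]; exact T.bc_cancel_tr f f hd x
  have hcomp : f.comp f' = GSetHom.id Y := ghext h2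
  calc T.tr f x = T.res f' (T.res f (T.tr f x)) := by rw [T.res_comp, hcomp, T.res_id]
    _ = T.res f' x := by rw [key]

theorem nm_iso {X Y : GSet G} (f : GSetHom X Y) (f' : GSetHom Y X)
    (h1 : ∀ x, f'.toFun (f.toFun x) = x) (h2 : ∀ y, f.toFun (f'.toFun y) = y)
    (x : T.obj X) : T.nm f x = T.res f' x := by
  have hd : ∀ a b : X.carrier, f.toFun a = f.toFun b ↔ a = b := by
    intro a b
    constructor
    · intro h; rw [← h1 a, h, h1 b]
    · intro h; rw [h]
  have key : T.res f (T.nm f x) = x := by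
    rw [T.nm_bc f f x]; exact T.bc_cancel_nm f f hd x
  have hcomp : f.comp f' = GSetHom.id Y := ghext h2
  calc T.nm f x = T.res f' (T.res f (T.nm f x)) := by rw [T.res_comp, hcomp, T.res_id]
    _ = T.res f' x := by rw [key]

end TambaraFunctor
end Mach2

section Mach3
variable {G : Type} [Group G]
namespace TambaraFunctor
variable (T : TambaraFunctor G)

theorem inl_diag : ∀ {X Y : GSet G} (x y : X.carrier),
    (GSet.inl X Y).toFun x = (GSet.inl X Y).toFun y ↔ x = y := by
  intro X Y x y
  constructor
  · exact fun h => Sum.inl.inj h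
  · intro h; rw [h]

theorem inr_diag : ∀ {X Y : GSet G} (x y : Y.carrier),
    (GSet.inr X Y).toFun x = (GSet.inr X Y).toFun y ↔ x = y := by
  intro X Y x y
  constructor
  · exact fun h => Sum.inr.inj h
  · intro h; rw [h]

theorem res_inl_tr_inl {X Y : GSet G} (a : T.obj X) :
    T.res (GSet.inl X Y) (T.tr (GSet.inl X Y) a) = a := by
  rw [T.tr_bc]; exact T.bc_cancel_tr _ _ (inl_diag) a

theorem res_inr_tr_inr {X Y : GSet G} (b : T.obj Y) :
    T.res (GSet.inr X Y) (T.tr (GSet.inr X Y) b) = b := by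
  rw [T.tr_bc]; exact T.bc_cancel_tr _ _ (inr_diag) b

theorem res_inl_nm_inl {X Y : GSet G} (a : T.obj X) :
    T.res (GSet.inl X Y) (T.nm (GSet.inl X Y) a) = a := by
  rw [T.nm_bc]; exact T.bc_cancel_nm _ _ (inl_diag) a

theorem res_inr_nm_inr {X Y : GSet G} (b : T.obj Y) :
    T.res (GSet.inr X Y) (T.nm (GSet.inr X Y) b) = b := by
  rw [T.nm_bc]; exact T.bc_cancel_nm _ _ (inr_diag) b

theorem pb_inl_inr_empty {X Y : GSet G} :
    (GSet.pullback (GSet.inl X Y) (GSet.inr X Y)).carrier → False := by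
  intro q
  exact Sum.inl_ne_inr q.property

theorem pb_inr_inl_empty {X Y : GSet G} :
    (GSet.pullback (GSet.inr X Y) (GSet.inl X Y)).carrier → False := by
  intro q
  exact Sum.inr_ne_inl q.property

theorem res_inr_tr_inl {X Y : GSet G} (a : T.obj X) :
    T.res (GSet.inr X Y) (T.tr (GSet.inl X Y) a) = 0 := by
  rw [T.tr_bc]
  have h0 : T.res (GSet.pbFst (GSet.inl X Y) (GSet.inr X Y)) a = 0 :=
    T.obj_subsingleton pb_inl_inr_empty _ _
  rw [h0, map_zero]

theorem res_inl_tr_inr {X Y : GSet G} (b : T.obj Y) :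
    T.res (GSet.inl X Y) (T.tr (GSet.inr X Y) b) = 0 := by
  rw [T.tr_bc]
  have h0 : T.res (GSet.pbFst (GSet.inr X Y) (GSet.inl X Y)) b = 0 :=
    T.obj_subsingleton pb_inr_inl_empty _ _
  rw [h0, map_zero]

theorem res_inr_nm_inl {X Y : GSet G} (a : T.obj X) :
    T.res (GSet.inr X Y) (T.nm (GSet.inl X Y) a) = 1 := by
  rw [T.nm_bc]
  have h0 : T.res (GSet.pbFst (GSet.inl X Y) (GSet.inr X Y)) a = 1 :=
    T.obj_subsingleton pb_inl_inr_empty _ _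
  rw [h0, map_one]

theorem res_inl_nm_inr {X Y : GSet G} (b : T.obj Y) :
    T.res (GSet.inl X Y) (T.nm (GSet.inr X Y) b) = 1 := by
  rw [T.nm_bc]
  have h0 : T.res (GSet.pbFst (GSet.inr X Y) (GSet.inl X Y)) b = 1 :=
    T.obj_subsingleton pb_inr_inl_empty _ _
  rw [h0, map_one]

theorem sum_decomp_add (X Y : GSet G) (t : T.obj (X.sum Y)) :
    t = T.tr (GSet.inl X Y) (T.res (GSet.inl X Y) t)
      + T.tr (GSet.inr X Y) (T.res (GSet.inr X Y) t) := by
  apply (T.add_bij X Y).injective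
  show (_, _) = (_, _)
  have l : T.res (GSet.inl X Y)
      (T.tr (GSet.inl X Y) (T.res (GSet.inl X Y) t)
        + T.tr (GSet.inr X Y) (T.res (GSet.inr X Y) t)) = T.res (GSet.inl X Y) t := by
    rw [map_add, T.res_inl_tr_inl, T.res_inl_tr_inr, add_zero]
  have r : T.res (GSet.inr X Y)
      (T.tr (GSet.inl X Y) (T.res (GSet.inl X Y) t)
        + T.tr (GSet.inr X Y) (T.res (GSet.inr X Y) t)) = T.res (GSet.inr X Y) t := by
    rw [map_add, T.res_inr_tr_inl, T.res_inr_tr_inr, zero_add]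
  rw [l, r]

theorem sum_decomp_mul (X Y : GSet G) (t : T.obj (X.sum Y)) :
    t = T.nm (GSet.inl X Y) (T.res (GSet.inl X Y) t)
      * T.nm (GSet.inr X Y) (T.res (GSet.inr X Y) t) := by
  apply (T.add_bij X Y).injective
  show (_, _) = (_, _)
  have l : T.res (GSet.inl X Y)
      (T.nm (GSet.inl X Y) (T.res (GSet.inl X Y) t)
        * T.nm (GSet.inr X Y) (T.res (GSet.inr X Y) t)) = T.res (GSet.inl X Y) t := by
    rw [map_mul, T.res_inl_nm_inl, T.res_inl_nm_inr, mul_one]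
  have r : T.res (GSet.inr X Y)
      (T.nm (GSet.inl X Y) (T.res (GSet.inl X Y) t)
        * T.nm (GSet.inr X Y) (T.res (GSet.inr X Y) t)) = T.res (GSet.inr X Y) t := by
    rw [map_mul, T.res_inr_nm_inl, T.res_inr_nm_inr, one_mul]
  rw [l, r]

end TambaraFunctor
end Mach3

section Mach4
variable {G : Type} [Group G]

namespace OrbitSplit
open Classical

variable (P : GSet G) (s : P.carrier)

def orbitSet : GSet G where
  carrier := { p : P.carrier // ∃ g : G, g • s = p }
  mulAction :=
  { smul := fun a p => ⟨a • p.val, by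
      obtain ⟨g, hg⟩ := p.property
      exact ⟨a * g, by rw [mul_smul, hg]⟩⟩
    one_smul := fun p => Subtype.ext (one_smul G p.val)
    mul_smul := fun a b p => Subtype.ext (mul_smul a b p.val) }

def restSet : GSet G where
  carrier := { p : P.carrier // ¬ ∃ g : G, g • s = p }
  mulAction :=
  { smul := fun a p => ⟨a • p.val, by
      intro hex
      obtain ⟨g, hg⟩ := hex
      exact p.property ⟨a⁻¹ * g, by rw [mul_smul, hg, inv_smul_smul]⟩⟩
    one_smul := fun p => Subtype.ext (one_smul G p.val)
    mul_smul := fun a b p => Subtype.ext (mul_smul a b p.val) }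

abbrev sumSet : GSet G := (orbitSet P s).sum (restSet P s)

def psi : GSetHom (sumSet P s) P :=
  ⟨Sum.elim Subtype.val Subtype.val, by rintro g (q | q) <;> rfl⟩

noncomputable def psi' : GSetHom P (sumSet P s) where
  toFun p := if h : ∃ g : G, g • s = p
    then Sum.inl (⟨p, h⟩ : { p : P.carrier // ∃ g : G, g • s = p })
    else Sum.inr (⟨p, h⟩ : { p : P.carrier // ¬ ∃ g : G, g • s = p })
  map_smul := by
    intro a p
    by_cases h : ∃ g : G, g • s = p
    · have h2 : ∃ g : G, g • s = a • p := by
        obtain ⟨g, hg⟩ := h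
        exact ⟨a * g, by rw [mul_smul, hg]⟩
      erw [dif_pos h2, dif_pos h]
      rfl
    · have h2 : ¬ ∃ g : G, g • s = a • p := by
        intro hex
        obtain ⟨g, hg⟩ := hex
        exact h ⟨a⁻¹ * g, by rw [mul_smul, hg, inv_smul_smul]⟩
      erw [dif_neg h2, dif_neg h]
      rfl

theorem psi_psi' : ∀ p : P.carrier, (psi P s).toFun ((psi' P s).toFun p) = p := by
  intro p
  dsimp only [psi, psi']
  by_cases h : ∃ g : G, g • s = p
  · erw [dif_pos h]; rfl
  · erw [dif_neg h]; rfl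

theorem psi'_psi : ∀ q : (sumSet P s).carrier, (psi' P s).toFun ((psi P s).toFun q) = q := by
  rintro (⟨p, hp⟩ | ⟨p, hp⟩) <;> simp only [psi, psi', Sum.elim_inl, Sum.elim_inr]
  · erw [dif_pos hp]; rfl
  · erw [dif_neg hp]; rfl

end OrbitSplit
end Mach4

section Mach5
variable {G : Type} [Group G] [Finite G]

namespace OrbitSplit
open Classical

variable (P : GSet G) (s : P.carrier)

/-- the orbit of a point of the fiber over `1` is isomorphic to `G/e` -/
def delta : GSetHom (GSet.regular G) (orbitSet P s) where
  toFun g := ⟨(id g : G) • s, ⟨g, rfl⟩⟩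
  map_smul := fun a x => Subtype.ext (mul_smul a x s)

variable (h : GSetHom P (GSet.regular G))

def h1 : GSetHom (orbitSet P s) (GSet.regular G) := (h.comp (psi P s)).comp (GSet.inl _ _)

def h2 : GSetHom (restSet P s) (GSet.regular G) := (h.comp (psi P s)).comp (GSet.inr _ _)

theorem h1_delta (hs1 : h.toFun s = (1 : G)) :
    ∀ g : G, (h1 P s h).toFun ((delta P s).toFun g) = g := by
  intro g
  show h.toFun (g • s) = g
  rw [h.map_smul, hs1]
  exact mul_one g

theorem delta_h1 (hs1 : h.toFun s = (1 : G)) :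
    ∀ o : (orbitSet P s).carrier, (delta P s).toFun ((h1 P s h).toFun o) = o := by
  rintro ⟨p, g, hg⟩
  apply Subtype.ext
  show (id (h.toFun p) : G) • s = p
  rw [← hg, h.map_smul, hs1]
  show (g * 1) • s = g • s
  rw [mul_one]

/-- the fiber of the whole space is the fiber of the rest plus one point -/
noncomputable def fiberEquiv (hss : h.toFun s = (1 : G)) :
    { p : P.carrier // h.toFun p = (1 : G) } ≃
      Option { q : (restSet P s).carrier // h.toFun q.val = (1 : G) } where
  toFun sp := if hq : ∃ g : G, g • s = sp.val then none
    else some ⟨⟨sp.val, hq⟩, sp.property⟩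
  invFun o := o.elim ⟨s, hss⟩ (fun x => ⟨x.val.val, x.property⟩)
  left_inv := by
    intro sp
    dsimp only
    by_cases hq : ∃ g : G, g • s = sp.val
    · rw [dif_pos hq]
      obtain ⟨g, hg⟩ := hq
      have hg1 : g * 1 = 1 := by
        have hp := sp.property
        rw [← hg, h.map_smul, hss] at hp
        exact hp
      have hg2 : g = 1 := by rwa [mul_one] at hg1
      apply Subtype.ext
      show s = sp.val
      rw [← hg, hg2, one_smul]
    · rw [dif_neg hq]
      rfl
  right_inv := by
    rintro (_ | x) <;> dsimp only [Option.elim]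
    · have hq : ∃ g : G, g • s = s := ⟨1, one_smul G s⟩
      rw [dif_pos hq]
    · rw [dif_neg x.val.property]
      exact congrArg some (Subtype.ext (Subtype.ext rfl))

theorem fiber_card (hss : h.toFun s = (1 : G)) :
    Nat.card { p : P.carrier // h.toFun p = (1 : G) }
      = Nat.card { q : (restSet P s).carrier // h.toFun q.val = (1 : G) } + 1 := by
  rw [Nat.card_congr (fiberEquiv P s h hss), Finite.card_option]

end OrbitSplit
end Mach5

section Mach6
variable {G : Type} [Group G] [Finite G]
namespace TambaraFunctor
open OrbitSplit

variable (T : TambaraFunctor G)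

theorem tr_free_mem (I : Ideal (T.obj (GSet.regular G))) :
    ∀ n : ℕ, ∀ (P : GSet G) (h : GSetHom P (GSet.regular G)) (u : T.obj P),
      Nat.card { p : P.carrier // h.toFun p = (1 : G) } = n →
      (∀ δ : GSetHom (GSet.regular G) P, T.res δ u ∈ I) →
      T.tr h u ∈ I := by
  intro n
  induction n using Nat.strong_induction_on with
  | _ n IH =>
    intro P h u hcard hprobe
    by_cases hS : Nonempty { p : P.carrier // h.toFun p = (1 : G) }
    · obtain ⟨⟨s, hs1⟩⟩ := hS
      have e1 : T.tr (psi P s) (T.res (psi P s) u) = u := by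
        rw [T.tr_iso (psi P s) (psi' P s) (psi'_psi P s) (psi_psi' P s), T.res_comp,
          show (psi P s).comp (psi' P s) = GSetHom.id P from ghext (psi_psi' P s), T.res_id]
      have e4 : T.tr h u
          = T.tr ((h.comp (psi P s)).comp (GSet.inl (orbitSet P s) (restSet P s)))
              (T.res (GSet.inl (orbitSet P s) (restSet P s)) (T.res (psi P s) u))
          + T.tr ((h.comp (psi P s)).comp (GSet.inr (orbitSet P s) (restSet P s)))
              (T.res (GSet.inr (orbitSet P s) (restSet P s)) (T.res (psi P s) u)) := by
        conv_lhs => rw [← e1, T.tr_comp]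
        conv_lhs => rw [T.sum_decomp_add (orbitSet P s) (restSet P s) (T.res (psi P s) u)]
        rw [map_add, T.tr_comp, T.tr_comp]
      rw [e4]
      apply I.add_mem
      · rw [T.tr_iso ((h.comp (psi P s)).comp (GSet.inl (orbitSet P s) (restSet P s)))
            (delta P s) (delta_h1 P s h hs1) (h1_delta P s h hs1)]
        rw [T.res_comp, T.res_comp]
        exact hprobe _
      · have hm : Nat.card { q : (restSet P s).carrier
            // ((h.comp (psi P s)).comp (GSet.inr (orbitSet P s) (restSet P s))).toFun q = (1 : G) } + 1 = n := by
          have := fiber_card P s h hs1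
          rw [hcard] at this
          exact this.symm
        apply IH _ (by omega) (restSet P s) _ _ rfl
        intro δ
        rw [T.res_comp, T.res_comp]
        exact hprobe _
    · have hE : P.carrier → False := fun p => hS ⟨⟨(show G from h.toFun p)⁻¹ • p, by
        rw [h.map_smul]; exact inv_mul_cancel (show G from h.toFun p)⟩⟩
      rw [T.obj_subsingleton hE u 0, map_zero]
      exact I.zero_mem

theorem nm_free_mem (I : Ideal (T.obj (GSet.regular G)))
    (P : GSet G) (h : GSetHom P (GSet.regular G)) (u : T.obj P)
    (hprobe : ∀ δ : GSetHom (GSet.regular G) P, T.res δ u ∈ I) :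
    T.nm h u - T.nm h 0 ∈ I := by
  by_cases hS : Nonempty { p : P.carrier // h.toFun p = (1 : G) }
  · obtain ⟨⟨s, hs1⟩⟩ := hS
    have formula : ∀ v : T.obj P, T.nm h v
        = T.res (delta P s) (T.res (GSet.inl (orbitSet P s) (restSet P s)) (T.res (psi P s) v))
          * T.nm ((h.comp (psi P s)).comp (GSet.inr (orbitSet P s) (restSet P s)))
              (T.res (GSet.inr (orbitSet P s) (restSet P s)) (T.res (psi P s) v)) := by
      intro v
      have e1 : T.nm (psi P s) (T.res (psi P s) v) = v := by
        rw [T.nm_iso (psi P s) (psi' P s) (psi'_psi P s) (psi_psi' P s), T.res_comp,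
          show (psi P s).comp (psi' P s) = GSetHom.id P from ghext (psi_psi' P s), T.res_id]
      conv_lhs => rw [← e1, T.nm_comp]
      conv_lhs => rw [T.sum_decomp_mul (orbitSet P s) (restSet P s) (T.res (psi P s) v)]
      rw [map_mul, T.nm_comp, T.nm_comp]
      rw [T.nm_iso ((h.comp (psi P s)).comp (GSet.inl (orbitSet P s) (restSet P s)))
          (delta P s) (delta_h1 P s h hs1) (h1_delta P s h hs1)]
    have h0 : T.nm h 0 = 0 := by
      rw [formula 0, map_zero, map_zero, map_zero, zero_mul]
    rw [formula u, h0, sub_zero]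
    refine Ideal.mul_mem_right _ _ ?_
    rw [T.res_comp, T.res_comp]
    exact hprobe _
  · have hE : P.carrier → False := fun p => hS ⟨⟨(show G from h.toFun p)⁻¹ • p, by
      rw [h.map_smul]; exact inv_mul_cancel (show G from h.toFun p)⟩⟩
    rw [T.obj_subsingleton hE u 0, sub_self]
    exact I.zero_mem

end TambaraFunctor
end Mach6

/-- for a `G`-invariant ideal `I ⊆ T(G/e)`, the family
`𝔦_I(X) = ⋂_{γ : G/e → X} (γ*)⁻¹(I)` is an ideal of `T` with `𝔦_I(G/e) = I`, and it is the
largest ideal of `T` whose value at `G/e` is `I`. -/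
theorem invariant_ideal_extends (G : Type) [Group G] [Finite G] (T : TambaraFunctor G)
    (I : Ideal (T.obj (GSet.regular G)))
    (hI : ∀ (g : G), ∀ a ∈ I, T.res (GSet.rightMul g) a ∈ I) :
    T.IsIdeal (fun X => ⨅ γ : GSetHom (GSet.regular G) X, I.comap (T.res γ)) ∧
    (⨅ γ : GSetHom (GSet.regular G) (GSet.regular G), I.comap (T.res γ)) = I ∧
    (∀ K : ∀ X : GSet G, Ideal (T.obj X), T.IsIdeal K → K (GSet.regular G) = I →
      ∀ X : GSet G, K X ≤ ⨅ γ : GSetHom (GSet.regular G) X, I.comap (T.res γ)) := by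
  refine ⟨⟨?_, ?_, ?_⟩, ?_, ?_⟩
  · -- res_mem
    intro X Y f y hy
    refine Ideal.mem_iInf.mpr fun γ => ?_
    rw [Ideal.mem_comap, T.res_comp]
    have := Ideal.mem_iInf.mp hy (f.comp γ)
    rwa [Ideal.mem_comap] at this
  · -- tr_mem
    intro X Y f x hx
    refine Ideal.mem_iInf.mpr fun γ => ?_
    rw [Ideal.mem_comap, T.tr_bc f γ x]
    apply T.tr_free_mem I _ (GSet.pullback f γ) (GSet.pbSnd f γ) _ rfl
    intro δ
    rw [T.res_comp]
    have := Ideal.mem_iInf.mp hx ((GSet.pbFst f γ).comp δ)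
    rwa [Ideal.mem_comap] at this
  · -- shriek_mem
    intro X Y f x hx
    refine Ideal.mem_iInf.mpr fun γ => ?_
    rw [Ideal.mem_comap]
    show T.res γ (T.nm f x - T.nm f 0) ∈ I
    rw [map_sub, T.nm_bc f γ x, T.nm_bc f γ 0, map_zero]
    apply T.nm_free_mem I (GSet.pullback f γ) (GSet.pbSnd f γ)
    intro δ
    rw [T.res_comp]
    have := Ideal.mem_iInf.mp hx ((GSet.pbFst f γ).comp δ)
    rwa [Ideal.mem_comap] at this
  · -- value at G/e
    apply le_antisymm
    · intro x hx
      have := Ideal.mem_iInf.mp hx (GSetHom.id (GSet.regular G))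
      rw [Ideal.mem_comap] at this
      rwa [show T.res (GSetHom.id (GSet.regular G)) x = x from T.res_id x] at this
    · intro x hx
      refine Ideal.mem_iInf.mpr fun γ => ?_
      rw [Ideal.mem_comap]
      have hγ : γ = GSet.rightMul (show G from γ.toFun (1 : G)) := by
        apply ghext
        intro z
        have h2 := γ.map_smul (show G from z) ((1 : G) : (GSet.regular G).carrier)
        have h4 : ((show G from z) • ((1 : G) : (GSet.regular G).carrier)) = z :=
          mul_one (show G from z)
        erw [h4] at h2
        exact h2
      rw [hγ]
      exact hI _ x hx
  · -- largest
    intro K hK hKreg X x hx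
    refine Ideal.mem_iInf.mpr fun γ => ?_
    rw [Ideal.mem_comap, ← hKreg]
    exact hK.res_mem γ hx
end
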